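/- arXiv:2203.06881 — 7 statements merged into one kernel-verified Lean document; each statement's English description precedes it below -/
import Mathlib

section
/- Let p be an odd prime and let u0, u1, u2, u3 be integers whose product is squarefree (each u_i squarefree). Suppose p divides u0, p does not divide u1*u2*u3, and -u2*u3 is a quadratic non-residue modulo p. Then the diagonal quadric u0*u2*x0^2 + u1*u3*x1^2 + u0*u3*x2^2 + u1*u2*x3^2 = 0 has no nontrivial solution over the p-adic numbers Q_p. -/
private lemma key_nsq {F : Type*} [Field F] {u v : F} (hu : u ≠ 0) (hv : ¬ IsSquare v) :
    ¬ IsSquare (u ^ 2 * v) := by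
  rintro ⟨c, hc⟩
  exact hv ⟨c / u, by field_simp; linear_combination hc⟩

private lemma key_quad {F : Type*} [Field F] {a b s t : F} (hns : ¬ IsSquare (-(a * b)))
    (h : a * s ^ 2 + b * t ^ 2 = 0) : s = 0 ∧ t = 0 := by
  have ha : a ≠ 0 := by
    rintro rfl
    exact hns ⟨0, by ring⟩
  have ht : t = 0 := by
    by_contra ht
    exact hns ⟨a * s / t, by field_simp; linear_combination -h⟩
  refine ⟨?_, ht⟩
  subst ht
  have : a * s ^ 2 = 0 := by linear_combination h
  rcases mul_eq_zero.1 this with h' | h'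
  · exact absurd h' ha
  · exact pow_eq_zero_iff two_ne_zero |>.1 h'

/-- Lemma (local solubility obstruction): for an odd prime `p` and squarefree integers
`u0, u1, u2, u3` with `p ∣ u0`, `p ∤ u1*u2*u3` and `-u2*u3` a quadratic non-residue mod `p`,
the diagonal quadric `u0u2 x0² + u1u3 x1² + u0u3 x2² + u1u2 x3² = 0` has no nontrivial
`ℚ_p`-point. -/
theorem stmt_0 (p : ℕ) [Fact p.Prime] (hodd : p ≠ 2)
    (u0 u1 u2 u3 : ℤ)
    (h0 : Squarefree u0) (h1 : Squarefree u1) (h2 : Squarefree u2) (h3 : Squarefree u3)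
    (hdvd : (p : ℤ) ∣ u0) (hndvd : ¬ (p : ℤ) ∣ u1 * u2 * u3)
    (hns : ¬ IsSquare ((-(u2 * u3) : ℤ) : ZMod p)) :
    ¬ ∃ x : Fin 4 → ℚ_[p], x ≠ 0 ∧
      ((u0 * u2 : ℤ) : ℚ_[p]) * (x 0) ^ 2 + ((u1 * u3 : ℤ) : ℚ_[p]) * (x 1) ^ 2 +
        ((u0 * u3 : ℤ) : ℚ_[p]) * (x 2) ^ 2 + ((u1 * u2 : ℤ) : ℚ_[p]) * (x 3) ^ 2 = 0 := by
  rintro ⟨x, hx, heq⟩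
  -- find coordinate of max norm
  obtain ⟨i0, hi0⟩ : ∃ i0, ∀ j, ‖x j‖ ≤ ‖x i0‖ := Finite.exists_max _
  have hxi0 : x i0 ≠ 0 := by
    intro h
    apply hx
    funext j
    have := hi0 j
    rw [h, norm_zero] at this
    simpa using le_antisymm this (norm_nonneg _)
  -- scaled solution in ℤ_[p]
  set c : ℚ_[p] := (x i0)⁻¹ with hc
  have hcy : ∀ j, ‖x j * c‖ ≤ 1 := by
    intro j
    rw [norm_mul, hc, norm_inv]
    rw [← div_eq_mul_inv, div_le_one (norm_pos_iff.2 hxi0)]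
    exact hi0 j
  set y : Fin 4 → ℤ_[p] := fun j => ⟨x j * c, hcy j⟩ with hy
  have hy0 : ‖y i0‖ = 1 := by
    show ‖x i0 * c‖ = 1
    rw [hc, mul_inv_cancel₀ hxi0, norm_one]
  have heqZ : ((u0 * u2 : ℤ) : ℤ_[p]) * (y 0) ^ 2 + ((u1 * u3 : ℤ) : ℤ_[p]) * (y 1) ^ 2 +
      ((u0 * u3 : ℤ) : ℤ_[p]) * (y 2) ^ 2 + ((u1 * u2 : ℤ) : ℤ_[p]) * (y 3) ^ 2 = 0 := by
    have hyv : ∀ j, ((y j : ℚ_[p])) = x j * c := fun j => rfl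
    push_cast at heq
    apply Subtype.ext
    push_cast
    linear_combination c ^ 2 * heq
  clear heq
  set φ := (PadicInt.toZMod : ℤ_[p] →+* ZMod p) with hφ
  have hker : ∀ z : ℤ_[p], φ z = 0 → (p : ℤ_[p]) ∣ z := by
    intro z hz
    have hz' : z ∈ RingHom.ker φ := hz
    rw [hφ, PadicInt.ker_toZMod, PadicInt.maximalIdeal_eq_span_p,
      Ideal.mem_span_singleton] at hz'
    exact hz'
  -- nonvanishing of u1, u2, u3 mod p
  have hu1 : ((u1 : ZMod p)) ≠ 0 := by
    rw [Ne, ZMod.intCast_zmod_eq_zero_iff_dvd]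
    exact fun h => hndvd ((h.mul_right u2).mul_right u3)
  have hu0z : ((u0 : ZMod p)) = 0 := (ZMod.intCast_zmod_eq_zero_iff_dvd _ _).2 hdvd
  push_cast at hns
  -- Step 1: reduce mod p
  have e1 := congrArg φ heqZ
  simp only [map_add, map_mul, map_pow, map_intCast, map_zero] at e1
  push_cast at e1
  rw [hu0z] at e1
  have step1 : φ (y 1) = 0 ∧ φ (y 3) = 0 := by
    apply key_quad (a := ((u1 : ZMod p)) * u3) (b := ((u1 : ZMod p)) * u2)
    · have hr : -(((u1 : ZMod p)) * u3 * (((u1 : ZMod p)) * u2)) =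
          ((u1 : ZMod p)) ^ 2 * (-(((u2 : ZMod p)) * u3)) := by ring
      rw [hr]
      exact key_nsq hu1 hns
    · linear_combination e1
  obtain ⟨a, ha⟩ := hker _ step1.1
  obtain ⟨b, hb⟩ := hker _ step1.2
  -- Step 2: write u0 = p * w and divide by p
  obtain ⟨w, hw⟩ := hdvd
  have hpw : ¬ (p : ℤ) ∣ w := by
    intro h
    exact ((Nat.prime_iff_prime_int.1 (Fact.out : p.Prime))).not_unit
      (h0 (p : ℤ) (by obtain ⟨v, hv⟩ := h; exact ⟨v, by rw [hw, hv]; ring⟩))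
  have hwz : ((w : ZMod p)) ≠ 0 := by
    rw [Ne, ZMod.intCast_zmod_eq_zero_iff_dvd]
    exact hpw
  have hp0 : ((p : ℤ_[p])) ≠ 0 := Nat.cast_ne_zero.2 (Fact.out : p.Prime).ne_zero
  rw [ha, hb] at heqZ
  have key2 : ((w * u2 : ℤ) : ℤ_[p]) * (y 0) ^ 2 + ((w * u3 : ℤ) : ℤ_[p]) * (y 2) ^ 2 +
      (p : ℤ_[p]) * (((u1 * u3 : ℤ) : ℤ_[p]) * a ^ 2 + ((u1 * u2 : ℤ) : ℤ_[p]) * b ^ 2) = 0 := by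
    apply mul_left_cancel₀ hp0
    rw [mul_zero]
    push_cast [hw] at heqZ ⊢
    linear_combination heqZ
  have e2 := congrArg φ key2
  simp only [map_add, map_mul, map_pow, map_intCast, map_natCast, map_zero,
    ZMod.natCast_self, zero_mul] at e2
  push_cast at e2
  have step2 : φ (y 0) = 0 ∧ φ (y 2) = 0 := by
    apply key_quad (a := ((w : ZMod p)) * u2) (b := ((w : ZMod p)) * u3)
    · have hr : -(((w : ZMod p)) * u2 * (((w : ZMod p)) * u3)) =
          ((w : ZMod p)) ^ 2 * (-(((u2 : ZMod p)) * u3)) := by ring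
      rw [hr]
      exact key_nsq hwz hns
    · linear_combination e2
  -- contradiction with primitivity
  have hall : φ (y i0) = 0 := by
    fin_cases i0
    · exact step2.1
    · exact step1.1
    · exact step2.2
    · exact step1.2
  have := (PadicInt.norm_lt_one_iff_dvd (y i0)).2 (hker _ hall)
  rw [hy0] at this
  exact lt_irrefl _ this
end

section
/- Let p be an odd prime and let u0, u1, u2, u3 be squarefree integers with p | u0, p ∤ u1*u2*u3, and -u2*u3 not a square modulo p. If (x0,x1,x2,x3) ∈ Z_p^4 satisfies u0*u2*x0^2 + u1*u3*x1^2 + u0*u3*x2^2 + u1*u2*x3^2 = 0, then p divides all of x0, x1, x2, x3 in Z_p (so the solution is imprimitive). -/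
lemma key_aux (p : ℕ) [Fact p.Prime] (u2 u3 : ℤ)
    (hns : ¬ IsSquare ((-(u2 * u3) : ℤ) : ZMod p))
    (h3 : ((u3 : ℤ) : ZMod p) ≠ 0)
    (a b : ZMod p) (h : (u3 : ZMod p) * a ^ 2 + (u2 : ZMod p) * b ^ 2 = 0) :
    a = 0 ∧ b = 0 := by
  have hb : b = 0 := by
    by_contra hb
    apply hns
    push_cast
    refine ⟨(u3 : ZMod p) * a * b⁻¹, ?_⟩
    have hbi : b * b⁻¹ = 1 := mul_inv_cancel₀ hb
    linear_combination (-(u3:ZMod p) * b⁻¹^2) * h +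
      ((u2:ZMod p)*(u3:ZMod p)*(b*b⁻¹+1)) * hbi
  subst hb
  have h' : (u3 : ZMod p) * a ^ 2 = 0 := by linear_combination h
  rcases mul_eq_zero.mp h' with h'' | h''
  · exact absurd h'' h3
  · exact ⟨pow_eq_zero_iff two_ne_zero |>.mp h'', rfl⟩

/-- Any `ℤ_p`-solution of the quadric is imprimitive: `p` divides every coordinate. -/
theorem stmt_1 (p : ℕ) [Fact p.Prime] (hodd : p ≠ 2)
    (u0 u1 u2 u3 : ℤ)
    (h0 : Squarefree u0) (h1 : Squarefree u1) (h2 : Squarefree u2) (h3 : Squarefree u3)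
    (hdvd : (p : ℤ) ∣ u0) (hndvd : ¬ (p : ℤ) ∣ u1 * u2 * u3)
    (hns : ¬ IsSquare ((-(u2 * u3) : ℤ) : ZMod p))
    (x : Fin 4 → ℤ_[p])
    (hx : ((u0 * u2 : ℤ) : ℤ_[p]) * (x 0) ^ 2 + ((u1 * u3 : ℤ) : ℤ_[p]) * (x 1) ^ 2 +
        ((u0 * u3 : ℤ) : ℤ_[p]) * (x 2) ^ 2 + ((u1 * u2 : ℤ) : ℤ_[p]) * (x 3) ^ 2 = 0) :
    ∀ i, (p : ℤ_[p]) ∣ x i := by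
  have hp := (Fact.out : p.Prime)
  have hiff : ∀ z : ℤ_[p], (p:ℤ_[p]) ∣ z ↔ PadicInt.toZMod z = 0 := fun z => by
    rw [← Ideal.mem_span_singleton, ← PadicInt.maximalIdeal_eq_span_p,
      ← PadicInt.ker_toZMod, RingHom.mem_ker]
  -- u1, u2, u3 are nonzero mod p
  have hu1 : ((u1:ℤ) : ZMod p) ≠ 0 := fun h => hndvd (dvd_mul_of_dvd_left
    (dvd_mul_of_dvd_left ((ZMod.intCast_zmod_eq_zero_iff_dvd _ _).mp h) _) _)
  have hu2 : ((u2:ℤ) : ZMod p) ≠ 0 := fun h => hndvd (dvd_mul_of_dvd_left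
    (dvd_mul_of_dvd_right ((ZMod.intCast_zmod_eq_zero_iff_dvd _ _).mp h) _) _)
  have hu3 : ((u3:ℤ) : ZMod p) ≠ 0 := fun h => hndvd
    (dvd_mul_of_dvd_right ((ZMod.intCast_zmod_eq_zero_iff_dvd _ _).mp h) _)
  have hu0 : ((u0:ℤ) : ZMod p) = 0 := (ZMod.intCast_zmod_eq_zero_iff_dvd _ _).mpr hdvd
  set φ := (PadicInt.toZMod : ℤ_[p] →+* ZMod p)
  have hφint : ∀ n : ℤ, φ ((n : ℤ) : ℤ_[p]) = (n : ZMod p) := fun n => map_intCast φ n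
  -- Step 1: reduce mod p
  have hred : (u1 : ZMod p) * ((u3 : ZMod p) * (φ (x 1)) ^ 2 + (u2 : ZMod p) * (φ (x 3)) ^ 2) = 0 := by
    have := congrArg φ hx
    simp only [map_add, map_mul, map_pow, map_zero, hφint] at this
    push_cast at this ⊢
    rw [hu0] at this
    linear_combination this
  have hkey1 := key_aux p u2 u3 hns hu3 (φ (x 1)) (φ (x 3))
    ((mul_eq_zero.mp hred).resolve_left hu1)
  have hx1 : (p:ℤ_[p]) ∣ x 1 := (hiff _).mpr hkey1.1
  have hx3 : (p:ℤ_[p]) ∣ x 3 := (hiff _).mpr hkey1.2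
  -- write u0 = p * v with p ∤ v
  obtain ⟨v, hv⟩ := hdvd
  have hpv : ¬ (p:ℤ) ∣ v := by
    intro hpdv
    obtain ⟨w, hw⟩ := hpdv
    have : IsUnit (p:ℤ) := h0 (p:ℤ) ⟨w, by rw [hv, hw]; ring⟩
    rcases Int.isUnit_iff.mp this with h | h <;>
      · have := hp.two_le; omega
  obtain ⟨y1, hy1⟩ := hx1
  obtain ⟨y3, hy3⟩ := hx3
  have hcancel : (p:ℤ_[p]) * ( ((v*u2:ℤ):ℤ_[p]) * (x 0)^2 + ((v*u3:ℤ):ℤ_[p]) * (x 2)^2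
      + (p:ℤ_[p]) * (((u1*u3:ℤ):ℤ_[p]) * y1^2 + ((u1*u2:ℤ):ℤ_[p]) * y3^2) ) = 0 := by
    rw [hy1, hy3] at hx
    push_cast [hv] at hx ⊢
    linear_combination hx
  have hpne : (p:ℤ_[p]) ≠ 0 := Nat.cast_ne_zero.mpr hp.ne_zero
  have E := (mul_eq_zero.mp hcancel).resolve_left hpne
  have hred2 : (v : ZMod p) * ((u2:ZMod p) * (φ (x 0))^2 + (u3:ZMod p) * (φ (x 2))^2) = 0 := by
    have := congrArg φ E
    simp only [map_add, map_mul, map_pow, map_zero, map_natCast, hφint] at this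
    push_cast at this ⊢
    rw [ZMod.natCast_self] at this
    linear_combination this
  have hvne : ((v:ℤ):ZMod p) ≠ 0 := fun h => hpv ((ZMod.intCast_zmod_eq_zero_iff_dvd _ _).mp h)
  have hns' : ¬ IsSquare ((-(u3*u2):ℤ) : ZMod p) := by rw [mul_comm]; exact hns
  have hkey2 := key_aux p u3 u2 hns' hu2 (φ (x 0)) (φ (x 2))
    ((mul_eq_zero.mp hred2).resolve_left hvne)
  have hx0 : (p:ℤ_[p]) ∣ x 0 := (hiff _).mpr hkey2.1
  have hx2 : (p:ℤ_[p]) ∣ x 2 := (hiff _).mpr hkey2.2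
  have hx1' : (p:ℤ_[p]) ∣ x 1 := ⟨y1, hy1⟩
  have hx3' : (p:ℤ_[p]) ∣ x 3 := ⟨y3, hy3⟩
  intro i; fin_cases i <;> assumption
end

section
/- There exist constants c > 0 and L0 ≥ 2 such that for all real L ≥ L0, the sum over squarefree integers n ≤ L of μ(n)^2 * τ(n) * φ*(n)^3 / n is at least c * (log L)^2, where τ is the number-of-divisors function and φ*(n) = ∏_{p | n} (1 - 1/p). -/
open Finset

namespace Stmt5

noncomputable def phist (a : ℕ) : ℝ := ∏ q ∈ a.primeFactors, (1 - 1/(q:ℝ))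

def A (M : ℕ) : Finset ℕ := (Finset.Icc 1 M).filter Squarefree

noncomputable def g (a : ℕ) : ℝ := phist a ^ 3 / a

lemma factor_pos {q : ℕ} (hq : q.Prime) : (0:ℝ) < 1 - 1/(q:ℝ) := by
  have h2 : (2:ℝ) ≤ q := by exact_mod_cast hq.two_le
  have : 1/(q:ℝ) ≤ 1/2 := by
    apply one_div_le_one_div_of_le <;> linarith
  linarith

lemma phist_pos (a : ℕ) : 0 < phist a :=
  Finset.prod_pos fun q hq => factor_pos (Nat.prime_of_mem_primeFactors hq)

lemma phist_le_one (a : ℕ) : phist a ≤ 1 := by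
  apply Finset.prod_le_one
  · exact fun q hq => le_of_lt (factor_pos (Nat.prime_of_mem_primeFactors hq))
  · intro q hq
    have : (0:ℝ) ≤ 1/(q:ℝ) := by positivity
    linarith

lemma g_nonneg (a : ℕ) : 0 ≤ g a := by
  have := phist_pos a
  unfold g; positivity

lemma mem_A {M a : ℕ} : a ∈ A M ↔ (1 ≤ a ∧ a ≤ M) ∧ Squarefree a := by
  simp [A, Finset.mem_filter, Finset.mem_Icc]

lemma phist_div {p a : ℕ} (hp : p.Prime) (hpa : p ∣ a) (ha : Squarefree a) :
    phist a = (1 - 1/(p:ℝ)) * phist (a/p) := by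
  have ha0 : a ≠ 0 := ha.ne_zero
  have hd : ¬ p ∣ (a/p) := by
    intro hd
    exact (Nat.squarefree_iff_prime_squarefree.mp ha p hp) ((Nat.dvd_div_iff_mul_dvd hpa).mp hd)
  have hcop : p.Coprime (a/p) := (Nat.Prime.coprime_iff_not_dvd hp).mpr hd
  have h0 : a / p ≠ 0 := by
    have := Nat.le_of_dvd (Nat.pos_of_ne_zero ha0) hpa
    have := Nat.one_le_div_iff hp.pos |>.mpr this
    omega
  conv_lhs => rw [show a = p * (a/p) from (Nat.mul_div_cancel' hpa).symm]
  rw [phist, phist, Nat.primeFactors_mul hp.ne_zero h0,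
    Finset.prod_union hcop.disjoint_primeFactors, hp.primeFactors, Finset.prod_singleton]

/-- Key injection lemma: sum over multiples of p in A M. -/
lemma sum_filter_dvd_le {M p : ℕ} (hp : p.Prime) (f : ℕ → ℝ)
    (hf0 : ∀ a, 0 ≤ f a)
    (hf : ∀ a ∈ A M, p ∣ a → f a ≤ f (a/p) / p) :
    ∑ a ∈ (A M).filter (fun a => p ∣ a), f a ≤ (1/(p:ℝ)) * ∑ a ∈ A M, f a := by
  set S := (A M).filter (fun a => p ∣ a) with hS
  have hmem : ∀ a ∈ S, a ∈ A M ∧ p ∣ a := by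
    intro a ha; simpa [hS, Finset.mem_filter] using ha
  have hinj : ∀ x ∈ S, ∀ y ∈ S, x/p = y/p → x = y := by
    intro x hx y hy hxy
    have hx' := Nat.mul_div_cancel' (hmem x hx).2
    have hy' := Nat.mul_div_cancel' (hmem y hy).2
    rw [← hx', ← hy', hxy]
  have himg : ∀ a ∈ S, a / p ∈ A M := by
    intro a ha
    obtain ⟨haA, hpa⟩ := hmem a ha
    rw [mem_A] at haA ⊢
    have ha1 : 1 ≤ a := haA.1.1
    refine ⟨⟨?_, le_trans (Nat.div_le_self a p) haA.1.2⟩,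
      haA.2.squarefree_of_dvd (Nat.div_dvd_of_dvd hpa)⟩
    exact (Nat.one_le_div_iff hp.pos).mpr (Nat.le_of_dvd (by omega) hpa)
  calc ∑ a ∈ S, f a ≤ ∑ a ∈ S, f (a/p) / p := by
        refine Finset.sum_le_sum fun a ha => hf a (hmem a ha).1 (hmem a ha).2
    _ = (1/(p:ℝ)) * ∑ a ∈ S, f (a/p) := by
        rw [Finset.mul_sum]
        exact Finset.sum_congr rfl fun a _ => by rw [div_eq_inv_mul, one_div]
    _ = (1/(p:ℝ)) * ∑ b ∈ S.image (·/p), f b := by rw [Finset.sum_image hinj]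
    _ ≤ (1/(p:ℝ)) * ∑ a ∈ A M, f a := by
        apply mul_le_mul_of_nonneg_left _ (by positivity)
        apply Finset.sum_le_sum_of_subset_of_nonneg
        · exact Finset.image_subset_iff.mpr himg
        · exact fun a _ _ => hf0 a

/-- telescoping bound on `∑ 1/k²` from 4 -/
lemma sum_sq_from4 (n : ℕ) (hn : 3 ≤ n) : ∑ b ∈ Finset.Icc 4 n, 1/(b:ℝ)^2 ≤ 1/3 - 1/(n:ℝ) := by
  induction n, hn using Nat.le_induction with
  | base => norm_num
  | succ n hn ih =>
    rw [Finset.sum_Icc_succ_top (by omega)]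
    have h1 : (1:ℝ) ≤ (n:ℝ) := by exact_mod_cast Nat.one_le_iff_ne_zero.mpr (by omega)
    have key : 1/((n:ℝ)+1)^2 ≤ 1/(n:ℝ) - 1/((n:ℝ)+1) := by
      rw [div_sub_div _ _ (by linarith) (by linarith), div_le_div_iff₀ (by positivity) (by positivity)]
      ring_nf
      nlinarith
    push_cast
    linarith

lemma sum_sq_Icc2 (n : ℕ) : ∑ b ∈ Finset.Icc 2 n, 1/(b:ℝ)^2 ≤ 3/4 := by
  rcases le_or_gt n 3 with h | h
  · interval_cases n <;> norm_num [Finset.sum_Icc_succ_top, Finset.Icc_self]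
  · have h3 : 3 ≤ n := by omega
    have hins : Finset.Icc 2 n = insert 2 (insert 3 (Finset.Icc 4 n)) := by
      ext x
      simp only [Finset.mem_Icc, Finset.mem_insert]
      omega
    rw [hins, Finset.sum_insert, Finset.sum_insert]
    · have h4 := sum_sq_from4 n h3
      have hn : (0:ℝ) < n := by exact_mod_cast (by omega : 0 < n)
      have hn' : (0:ℝ) ≤ 1/(n:ℝ) := by positivity
      have e2 : 1/((2:ℕ):ℝ)^2 = 1/4 := by norm_num
      have e3 : 1/((3:ℕ):ℝ)^2 = 1/9 := by norm_num
      rw [e2, e3]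
      linarith
    · simp
    · simp

lemma sum_sq_Icc1 (n : ℕ) : ∑ b ∈ Finset.Icc 1 n, 1/(b:ℝ)^2 ≤ 2 := by
  rcases Nat.eq_zero_or_pos n with h | h
  · simp [h]
  · have hins : Finset.Icc 1 n = insert 1 (Finset.Icc 2 n) := by
      ext x; simp only [Finset.mem_Icc, Finset.mem_insert]; omega
    rw [hins, Finset.sum_insert (by simp)]
    have h2 := sum_sq_Icc2 n
    have e1 : 1/((1:ℕ):ℝ)^2 = 1 := by norm_num
    rw [e1]
    linarith

/-- prime square reciprocal sum bound -/
lemma sum_prime_sq {M : ℕ} : ∑ p ∈ (A M).filter Nat.Prime, 1/(p:ℝ)^2 ≤ 3/4 := by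
  refine le_trans (Finset.sum_le_sum_of_subset_of_nonneg ?_ (fun i _ _ => by positivity))
    (sum_sq_Icc2 M)
  intro p hp
  simp only [Finset.mem_filter] at hp
  obtain ⟨hpA, hpp⟩ := hp
  rw [mem_A] at hpA
  exact Finset.mem_Icc.mpr ⟨hpp.two_le, hpA.1.2⟩

noncomputable def sqa (m : ℕ) : ℕ := (Nat.sq_mul_squarefree m).choose
noncomputable def sqb (m : ℕ) : ℕ := (Nat.sq_mul_squarefree m).choose_spec.choose

lemma sq_spec (m : ℕ) : (sqb m)^2 * sqa m = m ∧ Squarefree (sqa m) :=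
  (Nat.sq_mul_squarefree m).choose_spec.choose_spec

/-- squarefree harmonic lower bound -/
lemma harmonic_le_T0 (M : ℕ) :
    ∑ m ∈ Finset.Icc 1 M, (1:ℝ)/m ≤ 2 * ∑ a ∈ A M, (1:ℝ)/a := by
  have hmaps : ∀ m ∈ Finset.Icc 1 M, (sqb m, sqa m) ∈ Finset.Icc 1 M ×ˢ A M := by
    intro m hm
    rw [Finset.mem_Icc] at hm
    obtain ⟨heq, hsf⟩ := sq_spec m
    have hb0 : 1 ≤ sqb m := by
      rcases Nat.eq_zero_or_pos (sqb m) with h | h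
      · rw [h] at heq; simp at heq; omega
      · exact h
    have ha0 : 1 ≤ sqa m := by
      rcases Nat.eq_zero_or_pos (sqa m) with h | h
      · rw [h] at heq; simp at heq; omega
      · exact h
    have hbsq : 1 ≤ (sqb m)^2 := Nat.one_le_pow _ _ hb0
    have hale : sqa m ≤ m := by
      calc sqa m ≤ (sqb m)^2 * sqa m := Nat.le_mul_of_pos_left _ (by omega)
        _ = m := heq
    have hble : sqb m ≤ m := by
      calc sqb m ≤ (sqb m)^2 := by nlinarith
        _ ≤ (sqb m)^2 * sqa m := Nat.le_mul_of_pos_right _ (by omega)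
        _ = m := heq
    refine Finset.mem_product.mpr ⟨Finset.mem_Icc.mpr ⟨hb0, le_trans hble hm.2⟩, ?_⟩
    exact mem_A.mpr ⟨⟨ha0, le_trans hale hm.2⟩, hsf⟩
  have hinj : ∀ x ∈ Finset.Icc 1 M, ∀ y ∈ Finset.Icc 1 M,
      (fun m => (sqb m, sqa m)) x = (fun m => (sqb m, sqa m)) y → x = y := by
    intro x _ y _ hxy
    simp only [Prod.mk.injEq] at hxy
    rw [← (sq_spec x).1, ← (sq_spec y).1, hxy.1, hxy.2]
  calc ∑ m ∈ Finset.Icc 1 M, (1:ℝ)/m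
      = ∑ m ∈ Finset.Icc 1 M, (1:ℝ)/((sqb m)^2 * (sqa m)) := by
        refine Finset.sum_congr rfl fun m _ => ?_
        conv_lhs => rw [← (sq_spec m).1]
        push_cast
        ring
    _ = ∑ x ∈ (Finset.Icc 1 M).image (fun m => (sqb m, sqa m)), (1:ℝ)/((x.1)^2 * x.2) := by
        rw [Finset.sum_image hinj]
    _ ≤ ∑ x ∈ Finset.Icc 1 M ×ˢ A M, (1:ℝ)/((x.1)^2 * x.2) := by
        apply Finset.sum_le_sum_of_subset_of_nonneg
        · exact Finset.image_subset_iff.mpr hmaps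
        · intro x _ _; positivity
    _ = (∑ b ∈ Finset.Icc 1 M, 1/(b:ℝ)^2) * (∑ a ∈ A M, (1:ℝ)/a) := by
        rw [Finset.sum_product, Finset.sum_mul_sum]
        refine Finset.sum_congr rfl fun b _ => Finset.sum_congr rfl fun a _ => ?_
        rw [div_mul_div_comm, one_mul]
    _ ≤ 2 * ∑ a ∈ A M, (1:ℝ)/a := by
        apply mul_le_mul_of_nonneg_right (sum_sq_Icc1 M)
        exact Finset.sum_nonneg fun a _ => by positivity

noncomputable def cfun (p : ℕ) : ℝ := - Real.log (1 - 1/(p:ℝ))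
noncomputable def w (a : ℕ) : ℝ := ∑ p ∈ a.primeFactors, cfun p

lemma cfun_nonneg {p : ℕ} (hp : p.Prime) : 0 ≤ cfun p := by
  unfold cfun
  rw [neg_nonneg]
  apply Real.log_nonpos
  · exact le_of_lt (factor_pos hp)
  · have : (0:ℝ) ≤ 1/(p:ℝ) := by positivity
    linarith

lemma cfun_le {p : ℕ} (hp : p.Prime) : cfun p ≤ 2/(p:ℝ) := by
  have hp2 : (2:ℝ) ≤ p := by exact_mod_cast hp.two_le
  have hx : (0:ℝ) < 1/(p:ℝ) := by positivity
  have hx2 : 1/(p:ℝ) ≤ 1/2 := by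
    apply one_div_le_one_div_of_le <;> linarith
  set x := 1/(p:ℝ) with hxdef
  have hfac : (0:ℝ) < 1 - x := by linarith
  have h1 : Real.exp (-(2*x)) ≤ 1 - x := by
    have h2 : 1 + 2*x ≤ Real.exp (2*x) := by
      have := Real.add_one_le_exp (2*x); linarith
    have h3 : Real.exp (-(2*x)) = (Real.exp (2*x))⁻¹ := by
      rw [Real.exp_neg]
    rw [h3]
    have h4 : (Real.exp (2*x))⁻¹ ≤ (1+2*x)⁻¹ := by
      apply inv_anti₀ (by linarith) h2
    refine le_trans h4 ?_
    rw [inv_le_iff_one_le_mul₀ (by linarith)]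
    nlinarith
  have h5 : -(2*x) ≤ Real.log (1-x) := (Real.le_log_iff_exp_le hfac).mpr h1
  unfold cfun
  rw [← hxdef]
  have : 2/(p:ℝ) = 2*x := by rw [hxdef]; ring
  rw [this]
  linarith

lemma phist_eq_exp (a : ℕ) : phist a = Real.exp (- w a) := by
  have hlog : Real.log (phist a) = - w a := by
    unfold phist w cfun
    rw [Real.log_prod (fun q hq => ne_of_gt (factor_pos (Nat.prime_of_mem_primeFactors hq)))]
    rw [← Finset.sum_neg_distrib]
    simp
  rw [← hlog, Real.exp_log (phist_pos a)]

lemma primeFactors_eq_filter {M a : ℕ} (ha : a ∈ A M) :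
    a.primeFactors = ((A M).filter Nat.Prime).filter (fun p => p ∣ a) := by
  rw [mem_A] at ha
  ext p
  constructor
  · intro hmem
    have hp := Nat.prime_of_mem_primeFactors hmem
    have hpa := Nat.dvd_of_mem_primeFactors hmem
    have h1 : 1 ≤ p := hp.one_lt.le
    have h2 : p ≤ M := le_trans (Nat.le_of_dvd (by omega) hpa) ha.1.2
    exact Finset.mem_filter.mpr ⟨Finset.mem_filter.mpr ⟨mem_A.mpr ⟨⟨h1, h2⟩, hp.squarefree⟩, hp⟩, hpa⟩
  · intro hmem
    obtain ⟨h1, hpa⟩ := Finset.mem_filter.mp hmem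
    obtain ⟨_, hp⟩ := Finset.mem_filter.mp h1
    exact Nat.mem_primeFactors.mpr ⟨hp, hpa, by omega⟩

lemma W_le (M : ℕ) : ∑ a ∈ A M, w a / a ≤ (3/2) * ∑ a ∈ A M, (1:ℝ)/a := by
  set P := (A M).filter Nat.Prime with hP
  set T0 := ∑ a ∈ A M, (1:ℝ)/a with hT0
  have hT0nn : 0 ≤ T0 := Finset.sum_nonneg fun a _ => by positivity
  calc ∑ a ∈ A M, w a / a
      = ∑ a ∈ A M, ∑ p ∈ P, (if p ∣ a then cfun p / a else 0) := by
        refine Finset.sum_congr rfl fun a ha => ?_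
        rw [w, primeFactors_eq_filter ha, ← hP, Finset.sum_div, Finset.sum_filter]
    _ = ∑ p ∈ P, ∑ a ∈ (A M).filter (fun a => p ∣ a), cfun p / a := by
        rw [Finset.sum_comm]
        exact Finset.sum_congr rfl fun p _ => (Finset.sum_filter _ _).symm
    _ = ∑ p ∈ P, cfun p * ∑ a ∈ (A M).filter (fun a => p ∣ a), (1:ℝ)/a := by
        refine Finset.sum_congr rfl fun p _ => ?_
        rw [Finset.mul_sum]
        exact Finset.sum_congr rfl fun a _ => by rw [mul_one_div]
    _ ≤ ∑ p ∈ P, cfun p * ((1/(p:ℝ)) * T0) := by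
        refine Finset.sum_le_sum fun p hp => ?_
        have hpp : p.Prime := (Finset.mem_filter.mp hp).2
        apply mul_le_mul_of_nonneg_left _ (cfun_nonneg hpp)
        apply sum_filter_dvd_le hpp (fun a => (1:ℝ)/a) (fun a => by positivity)
        intro a haA hpa
        have hcast : (a:ℝ) = (p:ℝ) * ((a/p : ℕ):ℝ) := by
          rw [← Nat.cast_mul, Nat.mul_div_cancel' hpa]
        rw [hcast]
        apply le_of_eq
        rw [div_div]
        ring_nf
    _ ≤ ∑ p ∈ P, (2/(p:ℝ)) * ((1/(p:ℝ)) * T0) := by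
        refine Finset.sum_le_sum fun p hp => ?_
        have hpp : p.Prime := (Finset.mem_filter.mp hp).2
        have : (0:ℝ) ≤ (1/(p:ℝ)) * T0 := by positivity
        exact mul_le_mul_of_nonneg_right (cfun_le hpp) this
    _ = (∑ p ∈ P, 1/(p:ℝ)^2) * (2 * T0) := by
        rw [Finset.sum_mul]
        exact Finset.sum_congr rfl fun p _ => by ring
    _ ≤ (3/4) * (2*T0) := by
        apply mul_le_mul_of_nonneg_right sum_prime_sq (by positivity)
    _ = (3/2) * T0 := by ring

lemma w_nonneg (a : ℕ) : 0 ≤ w a :=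
  Finset.sum_nonneg fun p hp => cfun_nonneg (Nat.prime_of_mem_primeFactors hp)

lemma T_lower (M : ℕ) :
    Real.exp (-18) * ((3/4) * ∑ a ∈ A M, (1:ℝ)/a) ≤ ∑ a ∈ A M, g a := by
  set T0 := ∑ a ∈ A M, (1:ℝ)/a with hT0
  have hT0nn : 0 ≤ T0 := Finset.sum_nonneg fun a _ => by positivity
  have hbad : ∑ a ∈ (A M).filter (fun a => ¬ w a ≤ 6), (1:ℝ)/a ≤ (1/4) * T0 := by
    have step1 : ∑ a ∈ (A M).filter (fun a => ¬ w a ≤ 6), (1:ℝ)/a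
        ≤ ∑ a ∈ (A M).filter (fun a => ¬ w a ≤ 6), (w a / a)/6 := by
      refine Finset.sum_le_sum fun a ha => ?_
      obtain ⟨haA, hw⟩ := Finset.mem_filter.mp ha
      push_neg at hw
      have ha1 : 1 ≤ a := (mem_A.mp haA).1.1
      have hapos : (0:ℝ) < a := by exact_mod_cast ha1
      have h6 : (1:ℝ) ≤ w a / 6 := by linarith
      calc (1:ℝ)/a ≤ (w a/6)/a := (div_le_div_iff_of_pos_right hapos).mpr h6
        _ = w a / a / 6 := by ring
    have step2 : ∑ a ∈ (A M).filter (fun a => ¬ w a ≤ 6), (w a / a)/6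
        ≤ (∑ a ∈ A M, w a / a)/6 := by
      rw [← Finset.sum_div]
      refine (div_le_div_iff_of_pos_right (by norm_num)).mpr ?_
      refine Finset.sum_le_sum_of_subset_of_nonneg (Finset.filter_subset _ _) fun a haA _ => ?_
      have ha1 : 1 ≤ a := (mem_A.mp haA).1.1
      have hapos : (0:ℝ) < a := by exact_mod_cast ha1
      exact div_nonneg (w_nonneg a) (le_of_lt hapos)
    have := W_le M
    linarith
  have hsplit := Finset.sum_filter_add_sum_filter_not (A M) (fun a => w a ≤ 6) (fun a => (1:ℝ)/a)
  have hgood : (3/4) * T0 ≤ ∑ a ∈ (A M).filter (fun a => w a ≤ 6), (1:ℝ)/a := by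
    rw [hT0] at *
    linarith
  have hGdle : ∀ a ∈ (A M).filter (fun a => w a ≤ 6), Real.exp (-18) * ((1:ℝ)/a) ≤ g a := by
    intro a ha
    obtain ⟨haA, hw⟩ := Finset.mem_filter.mp ha
    have ha1 : 1 ≤ a := (mem_A.mp haA).1.1
    have hapos : (0:ℝ) < a := by exact_mod_cast ha1
    have h3 : Real.exp (-18) ≤ phist a ^ 3 := by
      rw [phist_eq_exp, ← Real.exp_nat_mul]
      apply Real.exp_le_exp.mpr
      push_cast
      linarith
    calc Real.exp (-18) * ((1:ℝ)/a) = Real.exp (-18)/a := by ring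
      _ ≤ phist a ^3 / a := (div_le_div_iff_of_pos_right hapos).mpr h3
      _ = g a := rfl
  calc Real.exp (-18) * ((3/4) * T0)
      ≤ Real.exp (-18) * ∑ a ∈ (A M).filter (fun a => w a ≤ 6), (1:ℝ)/a := by
        exact mul_le_mul_of_nonneg_left hgood (le_of_lt (Real.exp_pos _))
    _ = ∑ a ∈ (A M).filter (fun a => w a ≤ 6), Real.exp (-18) * ((1:ℝ)/a) :=
        Finset.mul_sum _ _ _
    _ ≤ ∑ a ∈ (A M).filter (fun a => w a ≤ 6), g a := Finset.sum_le_sum hGdle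
    _ ≤ ∑ a ∈ A M, g a :=
        Finset.sum_le_sum_of_subset_of_nonneg (Finset.filter_subset _ _) fun a _ _ => g_nonneg a

lemma phist_mul {a b : ℕ} (ha : a ≠ 0) (hb : b ≠ 0) (h : a.Coprime b) :
    phist (a*b) = phist a * phist b := by
  unfold phist
  rw [Nat.primeFactors_mul ha hb, Finset.prod_union h.disjoint_primeFactors]

lemma g_dvd_le {M p : ℕ} (hp : p.Prime) : ∀ a ∈ A M, p ∣ a → g a ≤ g (a/p) / (p:ℝ) := by
  intro a haA hpa
  obtain ⟨⟨ha1, -⟩, hsf⟩ := mem_A.mp haA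
  have hphi := phist_div hp hpa hsf
  have hcast : (a:ℝ) = (p:ℝ) * ((a/p : ℕ):ℝ) := by
    rw [← Nat.cast_mul, Nat.mul_div_cancel' hpa]
  have hppos : (0:ℝ) < p := by exact_mod_cast hp.pos
  have hq1 : 1 ≤ a / p := (Nat.one_le_div_iff hp.pos).mpr (Nat.le_of_dvd (by omega) hpa)
  have hqpos : (0:ℝ) < ((a/p:ℕ):ℝ) := by exact_mod_cast hq1
  have hfac := factor_pos hp
  have hpp := phist_pos (a/p)
  have h1 : ((1-1/(p:ℝ)) * phist (a/p))^3 ≤ phist (a/p)^3 := by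
    apply pow_le_pow_left₀ (by positivity)
    have hle1 : 1 - 1/(p:ℝ) ≤ 1 := by
      have : (0:ℝ) ≤ 1/(p:ℝ) := by positivity
      linarith
    nlinarith
  rw [g, g, hphi, hcast]
  calc ((1-1/(p:ℝ)) * phist (a/p))^3 / ((p:ℝ) * ((a/p:ℕ):ℝ))
      ≤ phist (a/p)^3 / ((p:ℝ) * ((a/p:ℕ):ℝ)) := (div_le_div_iff_of_pos_right (by positivity)).mpr h1
    _ = phist (a/p)^3 / ((a/p:ℕ):ℝ) / (p:ℝ) := by
        rw [div_div]
        ring_nf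

lemma coprime_pairs (M : ℕ) :
    (1/4) * (∑ a ∈ A M, g a)^2 ≤
    ∑ x ∈ (A M ×ˢ A M).filter (fun x => Nat.Coprime x.1 x.2), g x.1 * g x.2 := by
  set T := ∑ a ∈ A M, g a with hT
  have hTnn : 0 ≤ T := Finset.sum_nonneg fun a _ => g_nonneg a
  have htot : ∑ x ∈ A M ×ˢ A M, g x.1 * g x.2 = T^2 := by
    rw [Finset.sum_product]
    rw [hT, sq, Finset.sum_mul_sum]
  set P := (A M).filter Nat.Prime with hP
  have hbad : ∑ x ∈ (A M ×ˢ A M).filter (fun x => ¬ Nat.Coprime x.1 x.2), g x.1 * g x.2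
      ≤ (3/4) * T^2 := by
    set S := (A M ×ˢ A M).filter (fun x => ¬ Nat.Coprime x.1 x.2) with hS
    have hmaps : ∀ x ∈ S, (Nat.gcd x.1 x.2).minFac ∈ P := by
      intro x hx
      obtain ⟨hxm, hnc⟩ := Finset.mem_filter.mp hx
      obtain ⟨h1, h2⟩ := Finset.mem_product.mp hxm
      have h11 : 1 ≤ x.1 := (mem_A.mp h1).1.1
      have hgf : (Nat.gcd x.1 x.2).minFac.Prime := Nat.minFac_prime hnc
      have hdvd : (Nat.gcd x.1 x.2).minFac ∣ x.1 :=
        (Nat.minFac_dvd _).trans (Nat.gcd_dvd_left _ _)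
      have hle : (Nat.gcd x.1 x.2).minFac ≤ x.1 := Nat.le_of_dvd (by omega) hdvd
      exact Finset.mem_filter.mpr ⟨mem_A.mpr ⟨⟨hgf.one_lt.le.trans' (by omega),
        le_trans hle (mem_A.mp h1).1.2⟩, hgf.squarefree⟩, hgf⟩
    rw [← Finset.sum_fiberwise_of_maps_to hmaps (fun x => g x.1 * g x.2)]
    have hinner : ∀ p ∈ P, ∑ x ∈ S.filter (fun x => (Nat.gcd x.1 x.2).minFac = p),
        g x.1 * g x.2 ≤ (1/(p:ℝ)^2) * T^2 := by
      intro p hp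
      have hpp : p.Prime := (Finset.mem_filter.mp hp).2
      have hsub : S.filter (fun x => (Nat.gcd x.1 x.2).minFac = p) ⊆
          ((A M).filter (fun a => p ∣ a)) ×ˢ ((A M).filter (fun a => p ∣ a)) := by
        intro x hx
        obtain ⟨hxS, hkp⟩ := Finset.mem_filter.mp hx
        obtain ⟨hxm, hnc⟩ := Finset.mem_filter.mp hxS
        obtain ⟨h1, h2⟩ := Finset.mem_product.mp hxm
        have hd : p ∣ Nat.gcd x.1 x.2 := hkp ▸ Nat.minFac_dvd _
        exact Finset.mem_product.mpr ⟨Finset.mem_filter.mpr ⟨h1, hd.trans (Nat.gcd_dvd_left _ _)⟩,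
          Finset.mem_filter.mpr ⟨h2, hd.trans (Nat.gcd_dvd_right _ _)⟩⟩
      have hTp := sum_filter_dvd_le (M := M) hpp g g_nonneg (g_dvd_le (M := M) hpp)
      have hTpnn : 0 ≤ ∑ a ∈ (A M).filter (fun a => p ∣ a), g a :=
        Finset.sum_nonneg fun a _ => g_nonneg a
      calc ∑ x ∈ S.filter (fun x => (Nat.gcd x.1 x.2).minFac = p), g x.1 * g x.2
          ≤ ∑ x ∈ ((A M).filter (fun a => p ∣ a)) ×ˢ ((A M).filter (fun a => p ∣ a)),
            g x.1 * g x.2 := Finset.sum_le_sum_of_subset_of_nonneg hsub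
              (fun x _ _ => mul_nonneg (g_nonneg _) (g_nonneg _))
        _ = (∑ a ∈ (A M).filter (fun a => p ∣ a), g a)^2 := by
            rw [Finset.sum_product, sq, Finset.sum_mul_sum]
        _ ≤ ((1/(p:ℝ)) * T)^2 := pow_le_pow_left₀ hTpnn hTp 2
        _ = (1/(p:ℝ)^2) * T^2 := by ring
    calc ∑ p ∈ P, ∑ x ∈ S.filter (fun x => (Nat.gcd x.1 x.2).minFac = p), g x.1 * g x.2
        ≤ ∑ p ∈ P, (1/(p:ℝ)^2)*T^2 := Finset.sum_le_sum hinner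
      _ = (∑ p ∈ P, 1/(p:ℝ)^2) * T^2 := by rw [Finset.sum_mul]
      _ ≤ (3/4) * T^2 := mul_le_mul_of_nonneg_right sum_prime_sq (by positivity)
  have hsplit := Finset.sum_filter_add_sum_filter_not (A M ×ˢ A M)
    (fun x => Nat.Coprime x.1 x.2) (fun x => g x.1 * g x.2)
  linarith

open ArithmeticFunction in
lemma final_step (M N : ℕ) (hMN : M*M ≤ N) :
    ∑ x ∈ (A M ×ˢ A M).filter (fun x => Nat.Coprime x.1 x.2), g x.1 * g x.2
      ≤ ∑ n ∈ Finset.Icc 1 N,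
        ((moebius n : ℝ))^2 * (n.divisors.card : ℝ) *
          (∏ q ∈ n.primeFactors, (1 - 1 / (q : ℝ)))^3 / (n : ℝ) := by
  set S := (A M ×ˢ A M).filter (fun x => Nat.Coprime x.1 x.2) with hS
  have hmaps : ∀ x ∈ S, x.1 * x.2 ∈ Finset.Icc 1 N := by
    intro x hx
    obtain ⟨hxm, hcop⟩ := Finset.mem_filter.mp hx
    obtain ⟨h1, h2⟩ := Finset.mem_product.mp hxm
    have a1 := (mem_A.mp h1).1
    have b1 := (mem_A.mp h2).1
    refine Finset.mem_Icc.mpr ⟨?_, ?_⟩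
    · exact Nat.one_le_iff_ne_zero.mpr (Nat.mul_ne_zero (by omega) (by omega))
    · calc x.1*x.2 ≤ M*M := Nat.mul_le_mul a1.2 b1.2
        _ ≤ N := hMN
  rw [← Finset.sum_fiberwise_of_maps_to hmaps (fun x => g x.1 * g x.2)]
  apply Finset.sum_le_sum
  intro n hn
  have hn1 : 1 ≤ n := (Finset.mem_Icc.mp hn).1
  have hnpos : (0:ℝ) < n := by exact_mod_cast hn1
  have hval : ∀ x ∈ S.filter (fun x => x.1*x.2 = n),
      g x.1 * g x.2 = (moebius n : ℝ)^2 * phist n ^3 / n := by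
    intro x hx
    obtain ⟨hxS, hmul⟩ := Finset.mem_filter.mp hx
    obtain ⟨hxm, hcop⟩ := Finset.mem_filter.mp hxS
    obtain ⟨h1, h2⟩ := Finset.mem_product.mp hxm
    obtain ⟨⟨ha1, -⟩, hsfa⟩ := mem_A.mp h1
    obtain ⟨⟨hb1, -⟩, hsfb⟩ := mem_A.mp h2
    have hsfn : Squarefree n := hmul ▸ (Nat.squarefree_mul hcop).mpr ⟨hsfa, hsfb⟩
    have hmu : (moebius n : ℝ)^2 = 1 := by
      rw [moebius_apply_of_squarefree hsfn]
      push_cast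
      rw [← pow_mul, mul_comm, pow_mul]
      norm_num
    have hph : phist n = phist x.1 * phist x.2 := by
      rw [← hmul]
      exact phist_mul (by omega) (by omega) hcop
    have hx1 : (0:ℝ) < x.1 := by exact_mod_cast ha1
    have hx2 : (0:ℝ) < x.2 := by exact_mod_cast hb1
    rw [hmu, one_mul, hph, ← hmul]
    rw [g, g]
    push_cast
    field_simp
  have hcard : (S.filter (fun x => x.1*x.2 = n)).card ≤ n.divisors.card := by
    apply Finset.card_le_card_of_injOn (fun x => x.1)
    · intro x hx
      obtain ⟨hxS, hmul⟩ := Finset.mem_filter.mp hx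
      exact Nat.mem_divisors.mpr ⟨hmul ▸ dvd_mul_right x.1 x.2, by omega⟩
    · intro x hx y hy hxy
      simp only [Finset.coe_filter, Set.mem_setOf_eq] at hx hy
      obtain ⟨hxS, hmulx⟩ := hx
      obtain ⟨hyS, hmuly⟩ := hy
      obtain ⟨hxm, -⟩ := Finset.mem_filter.mp hxS
      obtain ⟨h1, -⟩ := Finset.mem_product.mp hxm
      have hx1 : 1 ≤ x.1 := (mem_A.mp h1).1.1
      have hxy' : x.1 = y.1 := hxy
      have heq2 : x.1 * x.2 = x.1 * y.2 := by
        rw [hmulx, hxy']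
        exact hmuly.symm
      have h2eq : x.2 = y.2 := Nat.eq_of_mul_eq_mul_left (by omega) heq2
      exact Prod.ext hxy' h2eq
  have hnn : (0:ℝ) ≤ (moebius n : ℝ)^2 * phist n ^3 / n := by
    have := phist_pos n
    positivity
  calc ∑ x ∈ S.filter (fun x => x.1*x.2 = n), g x.1 * g x.2
      = ∑ _x ∈ S.filter (fun x => x.1*x.2 = n), (moebius n:ℝ)^2 * phist n^3/n :=
        Finset.sum_congr rfl hval
    _ = (S.filter (fun x => x.1*x.2 = n)).card * ((moebius n:ℝ)^2 * phist n^3/n) := by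
        rw [Finset.sum_const, nsmul_eq_mul]
    _ ≤ (n.divisors.card : ℝ) * ((moebius n:ℝ)^2 * phist n^3/n) := by
        apply mul_le_mul_of_nonneg_right _ hnn
        exact_mod_cast hcard
    _ = (moebius n:ℝ)^2 * (n.divisors.card : ℝ) *
        (∏ q ∈ n.primeFactors, (1 - 1 / (q : ℝ)))^3 / (n : ℝ) := by
        rw [phist]
        ring

end Stmt5

open ArithmeticFunction in
/-- `∑_{n ≤ L} μ²(n) τ(n) φ*(n)³ / n ≫ (log L)²`. -/
theorem stmt_5 : ∃ c : ℝ, 0 < c ∧ ∃ L0 : ℝ, 2 ≤ L0 ∧ ∀ L : ℝ, L0 ≤ L →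
    c * (Real.log L) ^ 2 ≤
      ∑ n ∈ Finset.Icc 1 ⌊L⌋₊,
        ((moebius n : ℝ)) ^ 2 * (n.divisors.card : ℝ) *
          (∏ q ∈ n.primeFactors, (1 - 1 / (q : ℝ))) ^ 3 / (n : ℝ) := by
  refine ⟨(Real.exp (-18) * (3/16))^2 / 4, by positivity, 16, by norm_num, ?_⟩
  intro L hL
  have hL0 : (0:ℝ) < L := by linarith
  set M := ⌊Real.sqrt L⌋₊ with hM
  set N := ⌊L⌋₊ with hN
  have hMN : M*M ≤ N := by
    have h1 : (M:ℝ) ≤ Real.sqrt L := Nat.floor_le (Real.sqrt_nonneg L)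
    have h2 : ((M*M : ℕ):ℝ) ≤ L := by
      push_cast
      nlinarith [Real.sq_sqrt (le_of_lt hL0)]
    exact Nat.le_floor h2
  have hlog : Real.log (Real.sqrt L) ≤ ∑ m ∈ Finset.Icc 1 M, (1:ℝ)/m := by
    have h1 := log_le_harmonic_floor (Real.sqrt L) (Real.sqrt_nonneg L)
    have h2 : ((harmonic M : ℚ):ℝ) = ∑ m ∈ Finset.Icc 1 M, (1:ℝ)/m := by
      rw [harmonic_eq_sum_Icc]
      push_cast
      exact Finset.sum_congr rfl fun m _ => (one_div _).symm
    rw [← hM] at h1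
    linarith [h1, h2.le, h2.ge]
  set T0 := ∑ a ∈ Stmt5.A M, (1:ℝ)/a with hT0
  have hT0low : Real.log (Real.sqrt L) / 2 ≤ T0 := by
    have := Stmt5.harmonic_le_T0 M
    linarith
  have hT := Stmt5.T_lower M
  have hcp := Stmt5.coprime_pairs M
  have hfin := Stmt5.final_step M N hMN
  set T := ∑ a ∈ Stmt5.A M, Stmt5.g a with hTdef
  have hlogL : Real.log (Real.sqrt L) = Real.log L / 2 := Real.log_sqrt (le_of_lt hL0)
  have hlogpos : 0 ≤ Real.log L := Real.log_nonneg (by linarith)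
  have h5 : Real.exp (-18) * (3/16) * Real.log L ≤ T := by
    have h6 : Real.log L / 4 ≤ T0 := by
      rw [hlogL] at hT0low
      linarith
    nlinarith [Real.exp_pos (-18), hT]
  have h7 : (Real.exp (-18) * (3/16))^2 * (Real.log L)^2 / 4 ≤ (1/4) * T^2 := by
    have h8 : (Real.exp (-18) * (3/16) * Real.log L)^2 ≤ T^2 := by
      apply pow_le_pow_left₀ _ h5
      positivity
    nlinarith [h8]
  calc (Real.exp (-18) * (3/16))^2 / 4 * (Real.log L)^2
      = (Real.exp (-18) * (3/16))^2 * (Real.log L)^2 / 4 := by ring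
    _ ≤ (1/4) * T^2 := h7
    _ ≤ ∑ x ∈ (Stmt5.A M ×ˢ Stmt5.A M).filter (fun x => Nat.Coprime x.1 x.2),
        Stmt5.g x.1 * Stmt5.g x.2 := hcp
    _ ≤ _ := hfin
end

section
/- For every real T ≥ 1, one has ∑_{m ≤ √T} 1 / (m^2 * (1 + log(T/m^2))^2) ≪ 1 / (1 + log T)^2, i.e., there is an absolute constant C such that the sum is at most C / (1 + log T)^2. -/
/-- `∑_{m ≤ √T} 1/(m²(1 + log(T/m²))²) ≪ 1/(1 + log T)²`. -/
theorem stmt_7 : ∃ C : ℝ, ∀ T : ℝ, 1 ≤ T →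
    ∑ m ∈ Finset.Icc 1 ⌊Real.sqrt T⌋₊,
        1 / ((m : ℝ) ^ 2 * (1 + Real.log (T / (m : ℝ) ^ 2)) ^ 2) ≤
      C / (1 + Real.log T) ^ 2 := by
  have hsum : Summable (fun n : ℕ => 1 / (n : ℝ) ^ ((3 : ℝ) / 2)) :=
    Real.summable_one_div_nat_rpow.2 (by norm_num)
  set S : ℝ := ∑' n : ℕ, 1 / (n : ℝ) ^ ((3 : ℝ) / 2) with hSdef
  refine ⟨256 * S, fun T hT => ?_⟩
  set x := Real.log T with hxdef
  have hx : 0 ≤ x := Real.log_nonneg hT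
  have hx1 : (0:ℝ) < 1 + x := by linarith
  have key : ∀ m ∈ Finset.Icc 1 ⌊Real.sqrt T⌋₊,
      1 / ((m : ℝ) ^ 2 * (1 + Real.log (T / (m : ℝ) ^ 2)) ^ 2) ≤
        (1 / (m : ℝ) ^ ((3 : ℝ) / 2)) * (256 / (1 + x) ^ 2) := by
    intro m hm
    simp only [Finset.mem_Icc] at hm
    have hm1 : (1:ℝ) ≤ (m:ℝ) := by exact_mod_cast hm.1
    have hmpos : (0:ℝ) < (m:ℝ) := by linarith
    have hmsqrt : (m:ℝ) ≤ Real.sqrt T := by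
      calc (m:ℝ) ≤ (⌊Real.sqrt T⌋₊ : ℝ) := by exact_mod_cast hm.2
        _ ≤ Real.sqrt T := Nat.floor_le (Real.sqrt_nonneg T)
    have hm2T : (m:ℝ) ^ 2 ≤ T := by
      calc (m:ℝ) ^ 2 ≤ Real.sqrt T ^ 2 := by
            apply pow_le_pow_left₀ (le_of_lt hmpos) hmsqrt
        _ = T := Real.sq_sqrt (by linarith)
    set L := Real.log (m:ℝ) with hLdef
    have hL : 0 ≤ L := Real.log_nonneg hm1
    have hlogdiv : Real.log (T / (m:ℝ) ^ 2) = x - 2 * L := by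
      rw [Real.log_div (by linarith) (by positivity), Real.log_pow]
      push_cast; ring
    have h2L : 2 * L ≤ x := by
      have := Real.log_le_log (by positivity) hm2T
      rwa [Real.log_pow, Nat.cast_ofNat, ← hLdef, ← hxdef] at this
    set a := (m:ℝ) ^ ((1:ℝ)/4) with hadef
    have haexp : a = Real.exp (L / 4) := by
      rw [hadef, Real.rpow_def_of_pos hmpos]; ring_nf; rfl
    have ha1 : 1 + L / 4 ≤ a := by
      rw [haexp]; linarith [Real.add_one_le_exp (L / 4)]
    have hage1 : (1:ℝ) ≤ a := by linarith
    -- key scalar inequality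
    have hkey : 1 + x ≤ 16 * a * (1 + (x - 2 * L)) := by
      rcases le_or_gt (2 * L) (x / 2) with h | h
      · nlinarith
      · nlinarith
    set b := (m:ℝ) ^ ((3:ℝ)/2) with hbdef
    have hb : (0:ℝ) < b := Real.rpow_pos_of_pos hmpos _
    have ha : (0:ℝ) < a := by linarith
    have hm2 : (m:ℝ) ^ 2 = b * a * a := by
      rw [hbdef, hadef, ← Real.rpow_natCast (m:ℝ) 2, ← Real.rpow_add hmpos,
        ← Real.rpow_add hmpos]
      norm_num
    have hLm : (0:ℝ) ≤ x - 2 * L := by linarith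
    have h1Lm : (0:ℝ) < 1 + (x - 2 * L) := by linarith
    rw [hlogdiv, hm2]
    rw [div_le_iff₀ (by positivity)]
    have heq : 1 / b * (256 / (1 + x) ^ 2) * (b * a * a * (1 + (x - 2 * L)) ^ 2)
        = 256 * (a * (1 + (x - 2 * L))) ^ 2 / (1 + x) ^ 2 := by
      field_simp
    rw [heq, le_div_iff₀ (by positivity)]
    nlinarith [hkey, mul_pos ha h1Lm, hx1.le]
  calc ∑ m ∈ Finset.Icc 1 ⌊Real.sqrt T⌋₊,
        1 / ((m : ℝ) ^ 2 * (1 + Real.log (T / (m : ℝ) ^ 2)) ^ 2)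
      ≤ ∑ m ∈ Finset.Icc 1 ⌊Real.sqrt T⌋₊,
          (1 / (m : ℝ) ^ ((3 : ℝ) / 2)) * (256 / (1 + x) ^ 2) :=
        Finset.sum_le_sum key
    _ = (∑ m ∈ Finset.Icc 1 ⌊Real.sqrt T⌋₊, 1 / (m : ℝ) ^ ((3 : ℝ) / 2)) *
          (256 / (1 + x) ^ 2) := by rw [Finset.sum_mul]
    _ ≤ S * (256 / (1 + x) ^ 2) := by
        apply mul_le_mul_of_nonneg_right _ (by positivity)
        exact Summable.sum_le_tsum _ (fun i _ => by positivity) hsum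
    _ = 256 * S / (1 + x) ^ 2 := by ring
end

section
/- There exists a constant c > 0 such that for all B ≥ 1, the number of points (y0:y1:y2:y3) ∈ P^3(Q), represented by primitive integer vectors with max|y_i| ≤ √B, satisfying y0*y1 = y2*y3 and such that the quadric y0 x0^2 + y1 x1^2 + y2 x2^2 + y3 x3^2 = 0 has a point over every completion of Q, is at least c*B. -/
lemma aux_sum_sq : ∀ N : ℕ, 1 ≤ N →
    ∑ d ∈ Finset.Icc 2 N, ((d:ℝ)⁻¹)^2 ≤ 3/4 - 1/(2*N) - 1/(2*N+2) := by
  intro N hN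
  induction N with
  | zero => omega
  | succ n ih =>
    rcases Nat.lt_or_ge 1 (n+1) with h | h
    · have hn : 1 ≤ n := by omega
      rw [Finset.sum_Icc_succ_top (by omega : 2 ≤ n+1)]
      have hih := ih hn
      have hn0 : (0:ℝ) < n := by exact_mod_cast hn
      have key : ((↑(n+1):ℝ)⁻¹)^2 ≤ 1/(2*n) - 1/(2*n+4) := by
        have h4 : (1:ℝ)/(2*n) - 1/(2*n+4) = 4/((2*n)*(2*n+4)) := by
          field_simp; ring
        rw [h4, inv_pow, inv_eq_one_div, div_le_div_iff₀ (by positivity) (by positivity)]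
        push_cast
        nlinarith
      push_cast at key ⊢
      rw [show (2:ℝ)*((n:ℝ)+1)+2 = 2*(n:ℝ)+4 from by ring,
          show (2:ℝ)*((n:ℝ)+1) = 2*(n:ℝ)+2 from by ring]
      linarith
    · have : n = 0 := by omega
      subst this
      norm_num

lemma coprime_count (N : ℕ) (hN : 1 ≤ N) :
    ((N:ℝ))^2 / 4 ≤
      (((Finset.Icc 1 N ×ˢ Finset.Icc 1 N).filter
        (fun p : ℕ × ℕ => Nat.gcd p.1 p.2 = 1)).card : ℝ) := by
  classical
  set Q := Finset.Icc 1 N ×ˢ Finset.Icc 1 N with hQ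
  have hQcard : Q.card = N * N := by simp [hQ]
  have hsplit : (Q.filter fun p => Nat.gcd p.1 p.2 = 1).card
      + (Q.filter fun p => ¬ Nat.gcd p.1 p.2 = 1).card = N * N := by
    rw [Finset.card_filter_add_card_filter_not]; exact hQcard
  have hsub : (Q.filter fun p => ¬ Nat.gcd p.1 p.2 = 1) ⊆
      (Finset.Icc 2 N).biUnion (fun d => Q.filter fun p => d ∣ p.1 ∧ d ∣ p.2) := by
    intro p hp
    simp only [Finset.mem_filter, hQ, Finset.mem_product, Finset.mem_Icc] at hp
    obtain ⟨⟨⟨h11, h12⟩, h21, h22⟩, hg⟩ := hp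
    refine Finset.mem_biUnion.mpr ⟨Nat.gcd p.1 p.2, ?_, ?_⟩
    · refine Finset.mem_Icc.mpr ⟨?_, ?_⟩
      · have : Nat.gcd p.1 p.2 ≠ 0 := fun h => by
          have := Nat.eq_zero_of_gcd_eq_zero_left h; omega
        omega
      · exact le_trans (Nat.le_of_dvd (by omega) (Nat.gcd_dvd_left _ _)) h12
    · simp only [Finset.mem_filter, hQ, Finset.mem_product, Finset.mem_Icc]
      exact ⟨⟨⟨h11, h12⟩, h21, h22⟩, Nat.gcd_dvd_left _ _, Nat.gcd_dvd_right _ _⟩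
  have hterm : ∀ d, (Q.filter fun p => d ∣ p.1 ∧ d ∣ p.2).card = (N / d) * (N / d) := by
    intro d
    rw [hQ, Finset.filter_product (fun a => d ∣ a) (fun b => d ∣ b), Finset.card_product]
    rw [show Finset.Icc 1 N = Finset.Ioc 0 N from rfl, Nat.Ioc_filter_dvd_card_eq_div]
  have hbad : ((Q.filter fun p => ¬ Nat.gcd p.1 p.2 = 1).card : ℝ)
      ≤ 3/4 * (N:ℝ)^2 := by
    have h1 : (Q.filter fun p => ¬ Nat.gcd p.1 p.2 = 1).card
        ≤ ∑ d ∈ Finset.Icc 2 N, (N / d) * (N / d) := by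
      refine le_trans (Finset.card_le_card hsub) ?_
      refine le_trans (Finset.card_biUnion_le) ?_
      exact Finset.sum_le_sum fun d _ => le_of_eq (hterm d)
    have h2 : ((∑ d ∈ Finset.Icc 2 N, (N / d) * (N / d) : ℕ) : ℝ)
        ≤ (N:ℝ)^2 * ∑ d ∈ Finset.Icc 2 N, ((d:ℝ)⁻¹)^2 := by
      push_cast
      rw [Finset.mul_sum]
      refine Finset.sum_le_sum fun d hd => ?_
      have hd2 : 2 ≤ d := (Finset.mem_Icc.mp hd).1
      have hdc : ((N / d : ℕ) : ℝ) ≤ (N : ℝ) / d := Nat.cast_div_le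
      have hd0 : (0:ℝ) < d := by positivity
      have hnn : (0:ℝ) ≤ ((N / d : ℕ) : ℝ) := by positivity
      calc ((N / d : ℕ) : ℝ) * ((N / d : ℕ) : ℝ) ≤ ((N:ℝ)/d) * ((N:ℝ)/d) := by
            exact mul_le_mul hdc hdc hnn (by positivity)
        _ = (N:ℝ)^2 * ((d:ℝ)⁻¹)^2 := by field_simp
    have h3 : ∑ d ∈ Finset.Icc 2 N, ((d:ℝ)⁻¹)^2 ≤ 3/4 := by
      refine le_trans (aux_sum_sq N hN) ?_
      have hn0 : (0:ℝ) < N := by exact_mod_cast hN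
      have : (0:ℝ) < 1/(2*(N:ℝ)) := by positivity
      have : (0:ℝ) < 1/(2*(N:ℝ)+2) := by positivity
      linarith
    calc ((Q.filter fun p => ¬ Nat.gcd p.1 p.2 = 1).card : ℝ)
        ≤ ((∑ d ∈ Finset.Icc 2 N, (N / d) * (N / d) : ℕ) : ℝ) := by exact_mod_cast h1
      _ ≤ (N:ℝ)^2 * ∑ d ∈ Finset.Icc 2 N, ((d:ℝ)⁻¹)^2 := h2
      _ ≤ (N:ℝ)^2 * (3/4) := by
          have : (0:ℝ) ≤ (N:ℝ)^2 := by positivity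
          nlinarith [h3]
      _ = 3/4 * (N:ℝ)^2 := by ring
  have hcast : ((Q.filter fun p => Nat.gcd p.1 p.2 = 1).card : ℝ)
      + ((Q.filter fun p => ¬ Nat.gcd p.1 p.2 = 1).card : ℝ) = (N:ℝ) * N := by
    exact_mod_cast congrArg (Nat.cast : ℕ → ℝ) hsplit
  nlinarith [hcast, hbad]

/-- The map sending a coprime pair `(u,v)` to the vector `(u, v, -u, -v)`. -/
noncomputable def Fvec (p : ℕ × ℕ) : Fin 4 → ℤ := ![(p.1 : ℤ), (p.2 : ℤ), -(p.1 : ℤ), -(p.2 : ℤ)]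

lemma Fvec_inj : Function.Injective Fvec := by
  intro p q h
  have h0 := congrFun h 0
  have h1 := congrFun h 1
  simp only [Fvec, Matrix.cons_val_zero, Matrix.cons_val_one, Matrix.head_cons,
    Nat.cast_inj] at h0 h1
  exact Prod.ext h0 h1

/-- Lower bound: at least `cB` primitive integer vectors `y` of height `≤ √B` on the
split quadric `y0y1 = y2y3` whose fibre quadric is everywhere locally soluble
(each projective point is counted twice, once for each sign). -/
theorem stmt_14 : ∃ c : ℝ, 0 < c ∧ ∀ B : ℝ, 1 ≤ B →
    c * B ≤
      (Set.ncard {y : Fin 4 → ℤ |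
          (Finset.univ.gcd fun i => (y i).natAbs) = 1 ∧
          (∀ i, ((|y i| : ℤ) : ℝ) ≤ Real.sqrt B) ∧
          y 0 * y 1 = y 2 * y 3 ∧
          (∃ x : Fin 4 → ℝ, x ≠ 0 ∧ ∑ i, ((y i : ℤ) : ℝ) * (x i) ^ 2 = 0) ∧
          (∀ (p : ℕ) [Fact p.Prime], ∃ x : Fin 4 → ℚ_[p], x ≠ 0 ∧
            ∑ i, ((y i : ℤ) : ℚ_[p]) * (x i) ^ 2 = 0)} : ℝ) := by
  classical
  refine ⟨1/16, by norm_num, ?_⟩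
  intro B hB
  set T : Set (Fin 4 → ℤ) := {y : Fin 4 → ℤ |
          (Finset.univ.gcd fun i => (y i).natAbs) = 1 ∧
          (∀ i, ((|y i| : ℤ) : ℝ) ≤ Real.sqrt B) ∧
          y 0 * y 1 = y 2 * y 3 ∧
          (∃ x : Fin 4 → ℝ, x ≠ 0 ∧ ∑ i, ((y i : ℤ) : ℝ) * (x i) ^ 2 = 0) ∧
          (∀ (p : ℕ) [Fact p.Prime], ∃ x : Fin 4 → ℚ_[p], x ≠ 0 ∧
            ∑ i, ((y i : ℤ) : ℚ_[p]) * (x i) ^ 2 = 0)} with hT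
  have hsB : (1:ℝ) ≤ Real.sqrt B := by
    rw [show (1:ℝ) = Real.sqrt 1 from (Real.sqrt_one).symm]
    exact Real.sqrt_le_sqrt hB
  have hsB0 : (0:ℝ) ≤ Real.sqrt B := Real.sqrt_nonneg B
  set N : ℕ := ⌊Real.sqrt B⌋₊ with hNdef
  have hN1 : 1 ≤ N := Nat.le_floor (by exact_mod_cast hsB)
  have hNle : (N:ℝ) ≤ Real.sqrt B := Nat.floor_le hsB0
  have hNge : Real.sqrt B / 2 ≤ (N:ℝ) := by
    rcases le_or_gt (Real.sqrt B) 2 with h | h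
    · have : (1:ℝ) ≤ (N:ℝ) := by exact_mod_cast hN1
      linarith
    · have := Nat.sub_one_lt_floor (Real.sqrt B)
      linarith
  set S : Finset (ℕ × ℕ) := (Finset.Icc 1 N ×ˢ Finset.Icc 1 N).filter
      (fun p : ℕ × ℕ => Nat.gcd p.1 p.2 = 1) with hS
  -- image of S lands in T
  have himg : Fvec '' ↑S ⊆ T := by
    rintro y ⟨⟨u, v⟩, hp, rfl⟩
    simp only [hS, Finset.coe_filter, Set.mem_setOf_eq, Finset.mem_product,
      Finset.mem_Icc] at hp
    obtain ⟨⟨⟨hu1, hu2⟩, hv1, hv2⟩, hc⟩ := hp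
    have hub : ((u:ℝ)) ≤ Real.sqrt B := le_trans (by exact_mod_cast hu2) hNle
    have hvb : ((v:ℝ)) ≤ Real.sqrt B := le_trans (by exact_mod_cast hv2) hNle
    refine ⟨?_, ?_, ?_, ?_, ?_⟩
    · rw [show (Finset.univ : Finset (Fin 4)) = {0, 1, 2, 3} from rfl]
      simp only [Finset.gcd_insert, Finset.gcd_singleton, Fvec]
      simp only [Matrix.cons_val_zero, Matrix.cons_val_one, Matrix.head_cons,
        Matrix.cons_val_two, Matrix.tail_cons, Matrix.cons_val_three,
        Int.natAbs_neg, Int.natAbs_natCast]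
      simp only [normalize_eq]
      show Nat.gcd u (Nat.gcd v (Nat.gcd u v)) = 1
      rw [hc]
      simp
    · intro i
      fin_cases i <;> simp [Fvec] <;> try push_cast
      all_goals assumption
    · show Fvec (u, v) 0 * Fvec (u, v) 1 = Fvec (u, v) 2 * Fvec (u, v) 3
      simp only [Fvec, Matrix.cons_val_zero, Matrix.cons_val_one, Matrix.head_cons,
        Matrix.cons_val_two, Matrix.tail_cons, Matrix.cons_val_three]
      ring
    · refine ⟨fun _ => 1, ?_, ?_⟩
      · intro h
        have := congrFun h 0
        norm_num at this
      · rw [Fin.sum_univ_four]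
        simp only [Fvec, Matrix.cons_val_zero, Matrix.cons_val_one, Matrix.head_cons,
          Matrix.cons_val_two, Matrix.tail_cons, Matrix.cons_val_three]
        push_cast
        ring
    · intro p _
      refine ⟨fun _ => 1, ?_, ?_⟩
      · intro h
        have := congrFun h 0
        norm_num at this
      · rw [Fin.sum_univ_four]
        simp only [Fvec, Matrix.cons_val_zero, Matrix.cons_val_one, Matrix.head_cons,
          Matrix.cons_val_two, Matrix.tail_cons, Matrix.cons_val_three]
        push_cast
        ring
  -- T is finite
  have hTfin : T.Finite := by
    refine Set.Finite.subset (Set.Finite.pi (fun i : Fin 4 =>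
      Set.finite_Icc (-(N:ℤ)) (N:ℤ))) ?_
    intro y hy
    rw [hT] at hy
    intro i _
    have h := hy.2.1 i
    have habs : |y i| ≤ (N:ℤ) := by
      have : ((|y i| : ℤ) : ℝ) ≤ Real.sqrt B := h
      have h2 : |y i| ≤ ⌊Real.sqrt B⌋ := Int.le_floor.mpr this
      have h3 : (⌊Real.sqrt B⌋ : ℤ) = (N : ℤ) :=
        (Int.natCast_floor_eq_floor hsB0).symm
      omega
    exact Set.mem_Icc.mpr (abs_le.mp habs)
  -- chain of inequalities
  have hcount : ((N:ℝ))^2 / 4 ≤ (S.card : ℝ) := coprime_count N hN1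
  have hchain : (S.card : ℝ) ≤ (T.ncard : ℝ) := by
    have h1 : (Fvec '' ↑S).ncard = S.card := by
      rw [Set.ncard_image_of_injective _ Fvec_inj, Set.ncard_coe_finset]
    have h2 : (Fvec '' ↑S).ncard ≤ T.ncard := Set.ncard_le_ncard himg hTfin
    exact_mod_cast h1 ▸ h2
  have hB4 : B / 4 ≤ (N:ℝ)^2 := by
    have hsq : Real.sqrt B ^ 2 = B := Real.sq_sqrt (by linarith)
    nlinarith [hNge, hsB0]
  calc (1/16 : ℝ) * B = (B/4) / 4 := by ring
    _ ≤ (N:ℝ)^2 / 4 := by linarith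
    _ ≤ (S.card : ℝ) := hcount
    _ ≤ (T.ncard : ℝ) := hchain
end

section
/- For real parameters T0, T1, T2, T3 ≥ 1 ranging over powers of 2 subject to T0*T2, T0*T3, T1*T2, T1*T3 ≤ 4√B, one has ∑ T0*T1*T2*T3 / (1 + log min{T0,T1,T2,T3})^2 ≪ B, where the implied constant is absolute. -/
open Finset

open scoped Classical

private lemma ite_nonneg'' {p : Prop} [Decidable p] {x : ℝ} (hx : 0 ≤ x) :
    0 ≤ if p then x else 0 := by split_ifs <;> simp [hx]

/-- Sum of `1/(1+a log 2)²` is bounded by an absolute constant. -/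
private lemma sum_inv_sq (N : ℕ) :
    ∑ a ∈ range N, 1 / (1 + (a : ℝ) * Real.log 2) ^ 2 ≤ 4 := by
  have hlog : (1:ℝ)/2 ≤ Real.log 2 := by
    have := Real.log_two_gt_d9; linarith
  have h1 : ∀ a : ℕ, 1 / (1 + (a : ℝ) * Real.log 2) ^ 2
      ≤ 4 * (1 / ((a:ℝ) + 1) - 1 / ((a:ℝ) + 2)) := by
    intro a
    have ha : (0:ℝ) ≤ a := Nat.cast_nonneg a
    have h6 : 1 / ((a:ℝ)+1) - 1/((a:ℝ)+2) = 1 / (((a:ℝ)+1)*((a:ℝ)+2)) := by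
      rw [div_sub_div _ _ (by positivity) (by positivity)]; ring_nf
    have h2 : ((a:ℝ)+2)/2 ≤ 1 + (a:ℝ) * Real.log 2 := by nlinarith
    have h3 : (((a:ℝ)+2)/2)^2 ≤ (1 + (a:ℝ) * Real.log 2)^2 := by
      apply pow_le_pow_left₀ (by positivity) h2
    rw [h6, ← mul_div_assoc, mul_one, div_le_div_iff₀ (by positivity) (by positivity)]
    nlinarith [h3]
  calc ∑ a ∈ range N, 1 / (1 + (a : ℝ) * Real.log 2) ^ 2
      ≤ ∑ a ∈ range N, 4 * (1 / ((a:ℝ) + 1) - 1 / ((a:ℝ) + 2)) :=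
        Finset.sum_le_sum fun a _ => h1 a
    _ = 4 * ∑ a ∈ range N,
        ((fun i : ℕ => 1/((i:ℝ)+1)) a - (fun i : ℕ => 1/((i:ℝ)+1)) (a+1)) := by
        rw [Finset.mul_sum]
        refine Finset.sum_congr rfl fun a _ => ?_
        push_cast; ring
    _ = 4 * ((fun i : ℕ => 1/((i:ℝ)+1)) 0 - (fun i : ℕ => 1/((i:ℝ)+1)) N) := by
        rw [Finset.sum_range_sub']
    _ ≤ 4 := by
        have : (0:ℝ) ≤ 1/((N:ℝ)+1) := by positivity
        simp only []
        norm_num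
        linarith

/-- Capped geometric sum: summing `2^d` over `d` with `2^d ≤ Y` gives at most `2Y`. -/
private lemma geom_capY (N : ℕ) (Y : ℝ) (hY : 0 ≤ Y) :
    ∑ d ∈ range N, (if (2:ℝ) ^ d ≤ Y then (2:ℝ) ^ d else 0) ≤ 2 * Y := by
  rcases lt_or_ge Y 1 with h | h
  · have hz : ∀ d ∈ range N, (if (2:ℝ) ^ d ≤ Y then (2:ℝ) ^ d else 0) = 0 := by
      intro d _
      rw [if_neg]
      have : (1:ℝ) ≤ 2 ^ d := one_le_pow₀ (by norm_num)
      linarith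
    rw [Finset.sum_eq_zero hz]; linarith
  · have hfl : ⌊Y⌋₊ ≠ 0 := by
      have : (1:ℕ) ≤ ⌊Y⌋₊ := Nat.le_floor (by exact_mod_cast h)
      omega
    set t := Nat.log 2 ⌊Y⌋₊ with ht
    have key : ∀ d : ℕ, (2:ℝ) ^ d ≤ Y → d ≤ t := by
      intro d hd
      have h2 : (2:ℕ) ^ d ≤ ⌊Y⌋₊ := Nat.le_floor (by exact_mod_cast hd)
      exact (Nat.le_log_iff_pow_le (by norm_num) hfl).mpr h2
    have step1 : ∑ d ∈ range N, (if (2:ℝ)^d ≤ Y then (2:ℝ)^d else 0)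
        ≤ ∑ d ∈ range N, (if d ≤ t then (2:ℝ)^d else 0) := by
      refine Finset.sum_le_sum fun d _ => ?_
      by_cases hd : (2:ℝ)^d ≤ Y
      · rw [if_pos hd, if_pos (key d hd)]
      · rw [if_neg hd]; exact ite_nonneg'' (by positivity)
    have step2 : ∑ d ∈ range N, (if d ≤ t then (2:ℝ)^d else 0)
        ≤ ∑ d ∈ range (t+1), (2:ℝ)^d := by
      rw [← Finset.sum_filter]
      refine Finset.sum_le_sum_of_subset_of_nonneg ?_ (fun i _ _ => by positivity)
      intro d hd
      simp only [Finset.mem_filter, Finset.mem_range] at hd ⊢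
      omega
    have step3 : ∑ d ∈ range (t+1), (2:ℝ)^d ≤ 2 * Y := by
      rw [geom_sum_eq (by norm_num : (2:ℝ) ≠ 1)]
      have h2t : (2:ℝ)^t ≤ Y := by
        have h := Nat.pow_log_le_self 2 hfl
        calc (2:ℝ)^t = ((2^t : ℕ) : ℝ) := by push_cast; rfl
          _ ≤ (⌊Y⌋₊ : ℝ) := by exact_mod_cast h
          _ ≤ Y := Nat.floor_le hY
      have hp : (2:ℝ)^(t+1) = 2 * 2^t := by rw [pow_succ]; ring
      rw [hp]
      norm_num
      linarith
    linarith

private lemma geom_cap (N b : ℕ) (X : ℝ) (hX : 0 ≤ X) :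
    ∑ d ∈ range N, (if (2:ℝ) ^ b * 2 ^ d ≤ X then (2:ℝ) ^ d else 0)
      ≤ 2 * (X / 2 ^ b) := by
  have h2b : (0:ℝ) < 2 ^ b := by positivity
  have hiff : ∀ d : ℕ, ((2:ℝ) ^ b * 2 ^ d ≤ X) ↔ ((2:ℝ) ^ d ≤ X / 2 ^ b) := by
    intro d
    rw [le_div_iff₀ h2b, mul_comm]
  simp_rw [hiff]
  exact geom_capY N _ (by positivity)

private lemma tail_sum (N a : ℕ) :
    ∑ b ∈ range N, (if a ≤ b then (2:ℝ) ^ a / 2 ^ b else 0) ≤ 2 := by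
  have e1 : (range N).filter (fun b => a ≤ b) = Finset.Ico a N := by
    ext b
    simp only [Finset.mem_filter, Finset.mem_range, Finset.mem_Ico]
    omega
  rw [← Finset.sum_filter, e1, Finset.sum_Ico_eq_sum_range]
  have e2 : ∀ i : ℕ, (2:ℝ)^a / 2^(a+i) = (1/2)^i := by
    intro i
    rw [pow_add, div_pow, one_pow]
    rw [div_eq_div_iff (by positivity) (by positivity)]
    ring
  calc ∑ i ∈ range (N - a), (2:ℝ)^a/2^(a+i)
      = ∑ i ∈ range (N-a), (1/2:ℝ)^i := Finset.sum_congr rfl fun i _ => e2 i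
    _ ≤ 2 := sum_geometric_two_le _

/-- Weight factor carried by the minimal exponent. -/
private noncomputable def Fw (a b : ℕ) : ℝ :=
  if a ≤ b then (2:ℝ) ^ a * 2 ^ b / (1 + (a:ℝ) * Real.log 2) ^ 2 else 0

/-- Capped power factor. -/
private noncomputable def Pw (X : ℝ) (b c : ℕ) : ℝ :=
  if (2:ℝ) ^ b * 2 ^ c ≤ X then (2:ℝ) ^ c else 0

private lemma Fw_nonneg (a b : ℕ) : 0 ≤ Fw a b := ite_nonneg'' (by positivity)
private lemma Pw_nonneg (X : ℝ) (b c : ℕ) : 0 ≤ Pw X b c := ite_nonneg'' (by positivity)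

/-- The core estimate for one of the four symmetric cases. -/
private lemma core (N : ℕ) (X : ℝ) (hX : 0 ≤ X) :
    ∑ a ∈ range N, ∑ b ∈ range N, ∑ c ∈ range N, ∑ d ∈ range N,
      Fw a b * Pw X b c * Pw X b d ≤ 32 * X ^ 2 := by
  have hPcap : ∀ b : ℕ, ∑ x ∈ range N, Pw X b x ≤ 2 * (X / 2 ^ b) := by
    intro b; exact geom_cap N b X hX
  have hK : ∀ b : ℕ, (0:ℝ) ≤ 2 * (X / 2 ^ b) := fun b => by positivity
  have step1 : ∀ a b : ℕ, ∑ c ∈ range N, ∑ d ∈ range N, Fw a b * Pw X b c * Pw X b d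
      ≤ Fw a b * (2 * (X / 2 ^ b)) * (2 * (X / 2 ^ b)) := by
    intro a b
    calc ∑ c ∈ range N, ∑ d ∈ range N, Fw a b * Pw X b c * Pw X b d
        ≤ ∑ c ∈ range N, Fw a b * Pw X b c * (2 * (X / 2 ^ b)) := by
          refine Finset.sum_le_sum fun c _ => ?_
          rw [← Finset.mul_sum]
          exact mul_le_mul_of_nonneg_left (hPcap b)
            (mul_nonneg (Fw_nonneg a b) (Pw_nonneg X b c))
      _ = (∑ c ∈ range N, Pw X b c) * (Fw a b * (2 * (X / 2 ^ b))) := by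
          rw [Finset.sum_mul]
          exact Finset.sum_congr rfl fun c _ => by ring
      _ ≤ (2 * (X / 2 ^ b)) * (Fw a b * (2 * (X / 2 ^ b))) :=
          mul_le_mul_of_nonneg_right (hPcap b)
            (mul_nonneg (Fw_nonneg a b) (hK b))
      _ = Fw a b * (2 * (X / 2 ^ b)) * (2 * (X / 2 ^ b)) := by ring
  calc ∑ a ∈ range N, ∑ b ∈ range N, ∑ c ∈ range N, ∑ d ∈ range N,
        Fw a b * Pw X b c * Pw X b d
      ≤ ∑ a ∈ range N, ∑ b ∈ range N, Fw a b * (2 * (X / 2 ^ b)) * (2 * (X / 2 ^ b)) :=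
        Finset.sum_le_sum fun a _ => Finset.sum_le_sum fun b _ => step1 a b
    _ = ∑ a ∈ range N, ∑ b ∈ range N,
          (4 * X ^ 2 / (1 + (a:ℝ) * Real.log 2) ^ 2) *
            (if a ≤ b then (2:ℝ) ^ a / 2 ^ b else 0) := by
        refine Finset.sum_congr rfl fun a _ => Finset.sum_congr rfl fun b _ => ?_
        have h2b : ((2:ℝ) ^ b) ≠ 0 := by positivity
        have hD : ((1 + (a:ℝ) * Real.log 2) ^ 2) ≠ 0 := by positivity
        unfold Fw
        by_cases hab : a ≤ b
        · rw [if_pos hab, if_pos hab]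
          field_simp
          ring
        · rw [if_neg hab, if_neg hab]; ring
    _ ≤ ∑ a ∈ range N, (4 * X ^ 2 / (1 + (a:ℝ) * Real.log 2) ^ 2) * 2 := by
        refine Finset.sum_le_sum fun a _ => ?_
        rw [← Finset.mul_sum]
        exact mul_le_mul_of_nonneg_left (tail_sum N a) (by positivity)
    _ = 8 * X ^ 2 * ∑ a ∈ range N, 1 / (1 + (a:ℝ) * Real.log 2) ^ 2 := by
        rw [Finset.mul_sum]
        exact Finset.sum_congr rfl fun a _ => by ring
    _ ≤ 8 * X ^ 2 * 4 := mul_le_mul_of_nonneg_left (sum_inv_sq N) (by positivity)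
    _ = 32 * X ^ 2 := by ring

/-- Swapping the outer pair of summation variables with the inner pair. -/
private lemma sum4_swap (s : Finset ℕ) (f : ℕ → ℕ → ℕ → ℕ → ℝ) :
    (∑ a ∈ s, ∑ b ∈ s, ∑ c ∈ s, ∑ d ∈ s, f a b c d)
      = ∑ c ∈ s, ∑ d ∈ s, ∑ a ∈ s, ∑ b ∈ s, f a b c d := by
  have h := Finset.sum_comm (s := s ×ˢ s) (t := s ×ˢ s)
      (f := fun p q => f p.1 p.2 q.1 q.2)
  simpa [Finset.sum_product] using h

/-- Pointwise bound: the summand is dominated by the sum of the four case terms,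
according to which index realizes the minimum. -/
private lemma key (X : ℝ) (j0 j1 j2 j3 : ℕ) :
    (if (2:ℝ) ^ (j0 + j2) ≤ X ∧ (2:ℝ) ^ (j0 + j3) ≤ X ∧
        (2:ℝ) ^ (j1 + j2) ≤ X ∧ (2:ℝ) ^ (j1 + j3) ≤ X then
      (2:ℝ) ^ (j0 + j1 + j2 + j3) /
        (1 + Real.log ((2:ℝ) ^ (min (min j0 j1) (min j2 j3)))) ^ 2
    else 0)
    ≤ Fw j0 j1 * Pw X j1 j2 * Pw X j1 j3 + Fw j1 j0 * Pw X j0 j2 * Pw X j0 j3 +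
      Fw j2 j3 * Pw X j3 j0 * Pw X j3 j1 + Fw j3 j2 * Pw X j2 j0 * Pw X j2 j1 := by
  have nn : ∀ a b c d : ℕ, 0 ≤ Fw a b * Pw X b c * Pw X b d := fun a b c d =>
    mul_nonneg (mul_nonneg (Fw_nonneg _ _) (Pw_nonneg _ _ _)) (Pw_nonneg _ _ _)
  split_ifs with h
  · obtain ⟨h02, h03, h12, h13⟩ := h
    rw [Real.log_pow]
    simp only [pow_add] at h02 h03 h12 h13 ⊢
    have h20 : (2:ℝ) ^ j2 * 2 ^ j0 ≤ X := by rwa [mul_comm]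
    have h30 : (2:ℝ) ^ j3 * 2 ^ j0 ≤ X := by rwa [mul_comm]
    have h21 : (2:ℝ) ^ j2 * 2 ^ j1 ≤ X := by rwa [mul_comm]
    have h31 : (2:ℝ) ^ j3 * 2 ^ j1 ≤ X := by rwa [mul_comm]
    rcases le_total j0 j1 with h01 | h01 <;> rcases le_total j2 j3 with h23 | h23
    · rcases le_total j0 j2 with hm | hm
      · have hmin : min (min j0 j1) (min j2 j3) = j0 := by omega
        rw [hmin]
        have e : Fw j0 j1 * Pw X j1 j2 * Pw X j1 j3
            = (2:ℝ)^j0 * 2^j1 * 2^j2 * 2^j3 / (1 + (j0:ℝ) * Real.log 2) ^ 2 := by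
          simp only [Fw, Pw, if_pos h01, if_pos h12, if_pos h13]; ring
        linarith [nn j1 j0 j2 j3, nn j2 j3 j0 j1, nn j3 j2 j0 j1, e.ge]
      · have hmin : min (min j0 j1) (min j2 j3) = j2 := by omega
        rw [hmin]
        have e : Fw j2 j3 * Pw X j3 j0 * Pw X j3 j1
            = (2:ℝ)^j0 * 2^j1 * 2^j2 * 2^j3 / (1 + (j2:ℝ) * Real.log 2) ^ 2 := by
          simp only [Fw, Pw, if_pos h23, if_pos h30, if_pos h31]; ring
        linarith [nn j0 j1 j2 j3, nn j1 j0 j2 j3, nn j3 j2 j0 j1, e.ge]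
    · rcases le_total j0 j3 with hm | hm
      · have hmin : min (min j0 j1) (min j2 j3) = j0 := by omega
        rw [hmin]
        have e : Fw j0 j1 * Pw X j1 j2 * Pw X j1 j3
            = (2:ℝ)^j0 * 2^j1 * 2^j2 * 2^j3 / (1 + (j0:ℝ) * Real.log 2) ^ 2 := by
          simp only [Fw, Pw, if_pos h01, if_pos h12, if_pos h13]; ring
        linarith [nn j1 j0 j2 j3, nn j2 j3 j0 j1, nn j3 j2 j0 j1, e.ge]
      · have hmin : min (min j0 j1) (min j2 j3) = j3 := by omega
        rw [hmin]
        have e : Fw j3 j2 * Pw X j2 j0 * Pw X j2 j1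
            = (2:ℝ)^j0 * 2^j1 * 2^j2 * 2^j3 / (1 + (j3:ℝ) * Real.log 2) ^ 2 := by
          simp only [Fw, Pw, if_pos h23, if_pos h20, if_pos h21]; ring
        linarith [nn j0 j1 j2 j3, nn j1 j0 j2 j3, nn j2 j3 j0 j1, e.ge]
    · rcases le_total j1 j2 with hm | hm
      · have hmin : min (min j0 j1) (min j2 j3) = j1 := by omega
        rw [hmin]
        have e : Fw j1 j0 * Pw X j0 j2 * Pw X j0 j3
            = (2:ℝ)^j0 * 2^j1 * 2^j2 * 2^j3 / (1 + (j1:ℝ) * Real.log 2) ^ 2 := by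
          simp only [Fw, Pw, if_pos h01, if_pos h02, if_pos h03]; ring
        linarith [nn j0 j1 j2 j3, nn j2 j3 j0 j1, nn j3 j2 j0 j1, e.ge]
      · have hmin : min (min j0 j1) (min j2 j3) = j2 := by omega
        rw [hmin]
        have e : Fw j2 j3 * Pw X j3 j0 * Pw X j3 j1
            = (2:ℝ)^j0 * 2^j1 * 2^j2 * 2^j3 / (1 + (j2:ℝ) * Real.log 2) ^ 2 := by
          simp only [Fw, Pw, if_pos h23, if_pos h30, if_pos h31]; ring
        linarith [nn j0 j1 j2 j3, nn j1 j0 j2 j3, nn j3 j2 j0 j1, e.ge]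
    · rcases le_total j1 j3 with hm | hm
      · have hmin : min (min j0 j1) (min j2 j3) = j1 := by omega
        rw [hmin]
        have e : Fw j1 j0 * Pw X j0 j2 * Pw X j0 j3
            = (2:ℝ)^j0 * 2^j1 * 2^j2 * 2^j3 / (1 + (j1:ℝ) * Real.log 2) ^ 2 := by
          simp only [Fw, Pw, if_pos h01, if_pos h02, if_pos h03]; ring
        linarith [nn j0 j1 j2 j3, nn j2 j3 j0 j1, nn j3 j2 j0 j1, e.ge]
      · have hmin : min (min j0 j1) (min j2 j3) = j3 := by omega
        rw [hmin]
        have e : Fw j3 j2 * Pw X j2 j0 * Pw X j2 j1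
            = (2:ℝ)^j0 * 2^j1 * 2^j2 * 2^j3 / (1 + (j3:ℝ) * Real.log 2) ^ 2 := by
          simp only [Fw, Pw, if_pos h23, if_pos h20, if_pos h21]; ring
        linarith [nn j0 j1 j2 j3, nn j1 j0 j2 j3, nn j2 j3 j0 j1, e.ge]
  · linarith [nn j0 j1 j2 j3, nn j1 j0 j2 j3, nn j2 j3 j0 j1, nn j3 j2 j0 j1]

open scoped Classical in
/-- Summing `T0T1T2T3/(1 + log min Tᵢ)²` over powers of two `Tᵢ = 2^{jᵢ}` with
`T0T2, T0T3, T1T2, T1T3 ≤ 4√B` gives `O(B)`. -/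
theorem stmt_16 : ∃ C : ℝ, ∀ B : ℝ, 1 ≤ B →
    (∑ j0 ∈ Finset.range (⌊Real.logb 2 (4 * Real.sqrt B)⌋₊ + 1),
     ∑ j1 ∈ Finset.range (⌊Real.logb 2 (4 * Real.sqrt B)⌋₊ + 1),
     ∑ j2 ∈ Finset.range (⌊Real.logb 2 (4 * Real.sqrt B)⌋₊ + 1),
     ∑ j3 ∈ Finset.range (⌊Real.logb 2 (4 * Real.sqrt B)⌋₊ + 1),
      if (2 : ℝ) ^ (j0 + j2) ≤ 4 * Real.sqrt B ∧ (2 : ℝ) ^ (j0 + j3) ≤ 4 * Real.sqrt B ∧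
          (2 : ℝ) ^ (j1 + j2) ≤ 4 * Real.sqrt B ∧ (2 : ℝ) ^ (j1 + j3) ≤ 4 * Real.sqrt B then
        (2 : ℝ) ^ (j0 + j1 + j2 + j3) /
          (1 + Real.log ((2 : ℝ) ^ (min (min j0 j1) (min j2 j3)))) ^ 2
      else 0) ≤ C * B := by
  refine ⟨2048, fun B hB => ?_⟩
  have hB0 : (0:ℝ) ≤ B := by linarith
  set X := 4 * Real.sqrt B with hXdef
  have hX0 : (0:ℝ) ≤ X := by positivity
  have hX2 : X ^ 2 = 16 * B := by
    rw [hXdef, mul_pow, Real.sq_sqrt hB0]; norm_num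
  set N := ⌊Real.logb 2 X⌋₊ + 1 with hN
  calc (∑ j0 ∈ range N, ∑ j1 ∈ range N, ∑ j2 ∈ range N, ∑ j3 ∈ range N,
      if (2 : ℝ) ^ (j0 + j2) ≤ X ∧ (2 : ℝ) ^ (j0 + j3) ≤ X ∧
          (2 : ℝ) ^ (j1 + j2) ≤ X ∧ (2 : ℝ) ^ (j1 + j3) ≤ X then
        (2 : ℝ) ^ (j0 + j1 + j2 + j3) /
          (1 + Real.log ((2 : ℝ) ^ (min (min j0 j1) (min j2 j3)))) ^ 2
      else 0)
      ≤ ∑ j0 ∈ range N, ∑ j1 ∈ range N, ∑ j2 ∈ range N, ∑ j3 ∈ range N,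
          (Fw j0 j1 * Pw X j1 j2 * Pw X j1 j3 + Fw j1 j0 * Pw X j0 j2 * Pw X j0 j3 +
           Fw j2 j3 * Pw X j3 j0 * Pw X j3 j1 + Fw j3 j2 * Pw X j2 j0 * Pw X j2 j1) :=
        Finset.sum_le_sum fun j0 _ => Finset.sum_le_sum fun j1 _ =>
          Finset.sum_le_sum fun j2 _ => Finset.sum_le_sum fun j3 _ => key X j0 j1 j2 j3
    _ = (∑ j0 ∈ range N, ∑ j1 ∈ range N, ∑ j2 ∈ range N, ∑ j3 ∈ range N,
           Fw j0 j1 * Pw X j1 j2 * Pw X j1 j3)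
        + ((∑ j0 ∈ range N, ∑ j1 ∈ range N, ∑ j2 ∈ range N, ∑ j3 ∈ range N,
           Fw j1 j0 * Pw X j0 j2 * Pw X j0 j3)
        + ((∑ j0 ∈ range N, ∑ j1 ∈ range N, ∑ j2 ∈ range N, ∑ j3 ∈ range N,
           Fw j2 j3 * Pw X j3 j0 * Pw X j3 j1)
        + (∑ j0 ∈ range N, ∑ j1 ∈ range N, ∑ j2 ∈ range N, ∑ j3 ∈ range N,
           Fw j3 j2 * Pw X j2 j0 * Pw X j2 j1))) := by
        simp only [Finset.sum_add_distrib]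
        ring
    _ ≤ 32 * X ^ 2 + (32 * X ^ 2 + (32 * X ^ 2 + 32 * X ^ 2)) := by
        refine add_le_add ?_ (add_le_add ?_ (add_le_add ?_ ?_))
        · exact core N X hX0
        · exact (Finset.sum_comm (s := range N) (t := range N)
            (f := fun j0 j1 => ∑ j2 ∈ range N, ∑ j3 ∈ range N,
              Fw j1 j0 * Pw X j0 j2 * Pw X j0 j3)).trans_le (core N X hX0)
        · exact (sum4_swap (range N)
            (fun j0 j1 j2 j3 => Fw j2 j3 * Pw X j3 j0 * Pw X j3 j1)).trans_le
            (core N X hX0)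
        · exact ((sum4_swap (range N)
            (fun j0 j1 j2 j3 => Fw j3 j2 * Pw X j2 j0 * Pw X j2 j1)).trans
            (Finset.sum_comm (s := range N) (t := range N)
              (f := fun j2 j3 => ∑ j0 ∈ range N, ∑ j1 ∈ range N,
                Fw j3 j2 * Pw X j2 j0 * Pw X j2 j1))).trans_le (core N X hX0)
    _ = 2048 * B := by
        rw [show (32:ℝ) * X ^ 2 + (32 * X ^ 2 + (32 * X ^ 2 + 32 * X ^ 2))
          = 128 * X ^ 2 from by ring, hX2]
        ring
end

section
/- Let p be an odd prime and u0,u1,u2,u3 squarefree integers whose reduction mod p lies in Ω_p (the union of the four sets Ω_{p,i} of the paper). Then the quadric X: u0u2 x0^2 + u1u3 x1^2 + u0u3 x2^2 + u1u2 x3^2 = 0 has no Q_p-point; in particular the adelic set X(A_Q) is empty. -/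
section aux
variable {K : Type*} [Field K]

lemma pairZero (u v : K) (huv : u * v ≠ 0)
    (hns : ¬ ∃ a : K, a ≠ 0 ∧ a ^ 2 = -(u * v)) (y z : K)
    (h : u * y ^ 2 + v * z ^ 2 = 0) : y = 0 ∧ z = 0 := by
  have hu : u ≠ 0 := left_ne_zero_of_mul huv
  have hv : v ≠ 0 := right_ne_zero_of_mul huv
  have hz : z = 0 := by
    by_contra hz
    have ha2 : (u * y / z) ^ 2 = -(u * v) := by
      field_simp
      linear_combination h
    refine hns ⟨u * y / z, ?_, ha2⟩
    intro h0
    rw [h0] at ha2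
    simp only [ne_eq, zero_pow, OfNat.ofNat_ne_zero, not_false_eq_true, zero_eq_neg] at ha2
    exact huv ha2
  subst hz
  refine ⟨?_, rfl⟩
  simp only [ne_eq, OfNat.ofNat_ne_zero, not_false_eq_true, zero_pow, mul_zero, add_zero,
    mul_eq_zero, pow_eq_zero_iff] at h
  exact h.resolve_left hu

lemma scaleNS (s t : K) (hs : s ≠ 0)
    (hns : ¬ ∃ a : K, a ≠ 0 ∧ a ^ 2 = -t) :
    ¬ ∃ a : K, a ≠ 0 ∧ a ^ 2 = -(s ^ 2 * t) := by
  rintro ⟨a, ha, h2⟩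
  refine hns ⟨a / s, div_ne_zero ha hs, ?_⟩
  field_simp
  linear_combination h2

end aux

lemma step1 (p : ℕ) [Fact p.Prime] (A B C D : ℤ)
    (hx : ∃ x : Fin 4 → ℚ_[p], x ≠ 0 ∧
      (A : ℚ_[p]) * x 0 ^ 2 + (B : ℚ_[p]) * x 1 ^ 2 + (C : ℚ_[p]) * x 2 ^ 2 +
        (D : ℚ_[p]) * x 3 ^ 2 = 0) :
    ∃ y0 y1 y2 y3 : ℤ_[p], (y0 = 1 ∨ y1 = 1 ∨ y2 = 1 ∨ y3 = 1) ∧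
      (A : ℤ_[p]) * y0 ^ 2 + (B : ℤ_[p]) * y1 ^ 2 + (C : ℤ_[p]) * y2 ^ 2 +
        (D : ℤ_[p]) * y3 ^ 2 = 0 := by
  obtain ⟨x, hx0, heq⟩ := hx
  obtain ⟨i0, -, hmax⟩ := Finset.exists_max_image Finset.univ (fun i => ‖x i‖)
    ⟨0, Finset.mem_univ _⟩
  have hxi0 : x i0 ≠ 0 := by
    intro h
    apply hx0
    funext i
    have := hmax i (Finset.mem_univ i)
    rw [h] at this
    simpa using norm_le_zero_iff.mp (by simpa using this)
  have hmem : ∀ i, ‖x i / x i0‖ ≤ 1 := by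
    intro i
    rw [norm_div, div_le_one (norm_pos_iff.mpr hxi0)]
    exact hmax i (Finset.mem_univ i)
  set y : Fin 4 → ℤ_[p] := fun i => ⟨x i / x i0, hmem i⟩ with hy
  have hyi0 : y i0 = 1 := by
    apply Subtype.ext
    simp [hy, div_self hxi0]
  refine ⟨y 0, y 1, y 2, y 3, ?_, ?_⟩
  · fin_cases i0
    · exact Or.inl hyi0
    · exact Or.inr (Or.inl hyi0)
    · exact Or.inr (Or.inr (Or.inl hyi0))
    · exact Or.inr (Or.inr (Or.inr hyi0))
  · have : ((( (A : ℤ_[p]) * y 0 ^ 2 + (B : ℤ_[p]) * y 1 ^ 2 + (C : ℤ_[p]) * y 2 ^ 2 +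
        (D : ℤ_[p]) * y 3 ^ 2) : ℤ_[p]) : ℚ_[p]) = 0 := by
      have hyc : ∀ i, (y i : ℚ_[p]) = x i / x i0 := fun i => rfl
      push_cast [hyc]
      field_simp
      linear_combination heq
    rwa [PadicInt.coe_eq_zero] at this

lemma toZMod_eq_zero_iff_dvd (p : ℕ) [Fact p.Prime] (z : ℤ_[p]) :
    PadicInt.toZMod z = 0 ↔ (p : ℤ_[p]) ∣ z := by
  rw [← RingHom.mem_ker, PadicInt.ker_toZMod, PadicInt.maximalIdeal_eq_span_p,
    Ideal.mem_span_singleton]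

lemma step2 (p : ℕ) [Fact p.Prime] (a b c d : ℤ)
    (hcd : ∀ y z : ZMod p, (c : ZMod p) * y ^ 2 + (d : ZMod p) * z ^ 2 = 0 → y = 0 ∧ z = 0)
    (hab : ∀ y z : ZMod p, (a : ZMod p) * y ^ 2 + (b : ZMod p) * z ^ 2 = 0 → y = 0 ∧ z = 0)
    (y0 y1 y2 y3 : ℤ_[p])
    (heq : ((p * a : ℤ) : ℤ_[p]) * y0 ^ 2 + ((p * b : ℤ) : ℤ_[p]) * y1 ^ 2 +
      ((c : ℤ) : ℤ_[p]) * y2 ^ 2 + ((d : ℤ) : ℤ_[p]) * y3 ^ 2 = 0) :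
    ¬ (y0 = 1 ∨ y1 = 1 ∨ y2 = 1 ∨ y3 = 1) := by
  have hp0 : ((p : ℕ) : ℤ_[p]) ≠ 0 := Nat.cast_ne_zero.mpr (Fact.out : p.Prime).pos.ne'
  set φ := (PadicInt.toZMod : ℤ_[p] →+* ZMod p) with hφ
  have h1 : (c : ZMod p) * (φ y2) ^ 2 + (d : ZMod p) * (φ y3) ^ 2 = 0 := by
    have := congrArg φ heq
    push_cast at this
    simpa using this
  obtain ⟨hz2, hz3⟩ := hcd _ _ h1
  obtain ⟨z2, hz2'⟩ := (toZMod_eq_zero_iff_dvd p y2).mp hz2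
  obtain ⟨z3, hz3'⟩ := (toZMod_eq_zero_iff_dvd p y3).mp hz3
  have heq2 : (a : ℤ_[p]) * y0 ^ 2 + (b : ℤ_[p]) * y1 ^ 2 +
      (p : ℤ_[p]) * ((c : ℤ_[p]) * z2 ^ 2 + (d : ℤ_[p]) * z3 ^ 2) = 0 := by
    have hmul : (p : ℤ_[p]) * ((a : ℤ_[p]) * y0 ^ 2 + (b : ℤ_[p]) * y1 ^ 2 +
        (p : ℤ_[p]) * ((c : ℤ_[p]) * z2 ^ 2 + (d : ℤ_[p]) * z3 ^ 2)) = 0 := by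
      rw [hz2', hz3'] at heq
      push_cast at heq
      linear_combination heq
    exact (mul_eq_zero.mp hmul).resolve_left hp0
  have h2 : (a : ZMod p) * (φ y0) ^ 2 + (b : ZMod p) * (φ y1) ^ 2 = 0 := by
    have := congrArg φ heq2
    push_cast at this
    simpa using this
  obtain ⟨hz0, hz1⟩ := hab _ _ h2
  have hone : (1 : ZMod p) ≠ 0 := one_ne_zero
  rintro (h | h | h | h)
  · rw [h] at hz0; simp at hz0
  · rw [h] at hz1; simp at hz1
  · rw [h] at hz2; simp [φ] at hz2
  · rw [h] at hz3; simp [φ] at hz3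


lemma sqfree_unit (p : ℕ) [Fact p.Prime] (u v : ℤ) (h : Squarefree u) (huv : u = p * v) :
    (v : ZMod p) ≠ 0 := by
  intro hz
  obtain ⟨w, hw⟩ := (ZMod.intCast_zmod_eq_zero_iff_dvd v p).mp hz
  have hd : (p : ℤ) * p ∣ u := ⟨w, by rw [huv, hw]; ring⟩
  exact (Int.prime_iff_natAbs_prime.mpr (by simpa using (Fact.out : p.Prime))).not_unit (h _ hd)

lemma noSolCase (p : ℕ) [Fact p.Prime] (v w s t : ℤ)
    (hv : (v : ZMod p) ≠ 0) (hw : (w : ZMod p) ≠ 0)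
    (hs : (s : ZMod p) ≠ 0) (ht : (t : ZMod p) ≠ 0)
    (hns : ¬ ∃ a : ZMod p, a ≠ 0 ∧ a ^ 2 = -((s : ZMod p) * t))
    (hx : ∃ x : Fin 4 → ℚ_[p], x ≠ 0 ∧
      ((p * v * s : ℤ) : ℚ_[p]) * x 0 ^ 2 + ((p * v * t : ℤ) : ℚ_[p]) * x 1 ^ 2 +
        ((w * s : ℤ) : ℚ_[p]) * x 2 ^ 2 + ((w * t : ℤ) : ℚ_[p]) * x 3 ^ 2 = 0) : False := by
  obtain ⟨y0, y1, y2, y3, hunit, heqy⟩ := step1 p (p * v * s) (p * v * t) (w * s) (w * t) hx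
  have hnsW : ¬ ∃ a : ZMod p, a ≠ 0 ∧ a ^ 2 = -((w : ZMod p) * s * ((w : ZMod p) * t)) := by
    rintro ⟨a, ha, he⟩
    exact scaleNS (w : ZMod p) ((s : ZMod p) * t) hw hns ⟨a, ha, by rw [he]; ring⟩
  have hnsV : ¬ ∃ a : ZMod p, a ≠ 0 ∧ a ^ 2 = -((v : ZMod p) * s * ((v : ZMod p) * t)) := by
    rintro ⟨a, ha, he⟩
    exact scaleNS (v : ZMod p) ((s : ZMod p) * t) hv hns ⟨a, ha, by rw [he]; ring⟩
  refine step2 p (v * s) (v * t) (w * s) (w * t) ?_ ?_ y0 y1 y2 y3 ?_ hunit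
  · intro y z h
    push_cast at h
    exact pairZero ((w : ZMod p) * s) ((w : ZMod p) * t)
      (mul_ne_zero (mul_ne_zero hw hs) (mul_ne_zero hw ht)) hnsW y z h
  · intro y z h
    push_cast at h
    exact pairZero ((v : ZMod p) * s) ((v : ZMod p) * t)
      (mul_ne_zero (mul_ne_zero hv hs) (mul_ne_zero hv ht)) hnsV y z h
  · push_cast at heqy ⊢
    linear_combination heqy

/-- If the squarefree coefficients reduce into `Ω_p`, then the quadric
`u0u2 x0² + u1u3 x1² + u0u3 x2² + u1u2 x3² = 0` has no `ℚ_p`-point; in particular it is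
not everywhere locally soluble. -/
theorem stmt_19 (p : ℕ) [Fact p.Prime] (hodd : p ≠ 2)
    (u0 u1 u2 u3 : ℤ)
    (h0 : Squarefree u0) (h1 : Squarefree u1) (h2 : Squarefree u2) (h3 : Squarefree u3)
    (hmem :
      ((u0 : ZMod p) = 0 ∧ (u1 : ZMod p) * (u2 : ZMod p) * (u3 : ZMod p) ≠ 0 ∧
        ¬ ∃ a : ZMod p, a ≠ 0 ∧ a ^ 2 = -((u2 : ZMod p) * (u3 : ZMod p))) ∨
      ((u1 : ZMod p) = 0 ∧ (u0 : ZMod p) * (u2 : ZMod p) * (u3 : ZMod p) ≠ 0 ∧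
        ¬ ∃ a : ZMod p, a ≠ 0 ∧ a ^ 2 = -((u2 : ZMod p) * (u3 : ZMod p))) ∨
      ((u2 : ZMod p) = 0 ∧ (u0 : ZMod p) * (u1 : ZMod p) * (u3 : ZMod p) ≠ 0 ∧
        ¬ ∃ a : ZMod p, a ≠ 0 ∧ a ^ 2 = -((u0 : ZMod p) * (u1 : ZMod p))) ∨
      ((u3 : ZMod p) = 0 ∧ (u0 : ZMod p) * (u1 : ZMod p) * (u2 : ZMod p) ≠ 0 ∧
        ¬ ∃ a : ZMod p, a ≠ 0 ∧ a ^ 2 = -((u0 : ZMod p) * (u1 : ZMod p)))) :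
    (¬ ∃ x : Fin 4 → ℚ_[p], x ≠ 0 ∧
        ((u0 * u2 : ℤ) : ℚ_[p]) * (x 0) ^ 2 + ((u1 * u3 : ℤ) : ℚ_[p]) * (x 1) ^ 2 +
          ((u0 * u3 : ℤ) : ℚ_[p]) * (x 2) ^ 2 + ((u1 * u2 : ℤ) : ℚ_[p]) * (x 3) ^ 2 = 0) ∧
    ¬ ((∃ x : Fin 4 → ℝ, x ≠ 0 ∧
          ((u0 * u2 : ℤ) : ℝ) * (x 0) ^ 2 + ((u1 * u3 : ℤ) : ℝ) * (x 1) ^ 2 +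
            ((u0 * u3 : ℤ) : ℝ) * (x 2) ^ 2 + ((u1 * u2 : ℤ) : ℝ) * (x 3) ^ 2 = 0) ∧
        (∀ (q : ℕ) [Fact q.Prime], ∃ x : Fin 4 → ℚ_[q], x ≠ 0 ∧
          ((u0 * u2 : ℤ) : ℚ_[q]) * (x 0) ^ 2 + ((u1 * u3 : ℤ) : ℚ_[q]) * (x 1) ^ 2 +
            ((u0 * u3 : ℤ) : ℚ_[q]) * (x 2) ^ 2 + ((u1 * u2 : ℤ) : ℚ_[q]) * (x 3) ^ 2 = 0)) := by
  have H : ¬ ∃ x : Fin 4 → ℚ_[p], x ≠ 0 ∧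
      ((u0 * u2 : ℤ) : ℚ_[p]) * (x 0) ^ 2 + ((u1 * u3 : ℤ) : ℚ_[p]) * (x 1) ^ 2 +
        ((u0 * u3 : ℤ) : ℚ_[p]) * (x 2) ^ 2 + ((u1 * u2 : ℤ) : ℚ_[p]) * (x 3) ^ 2 = 0 := by
    rintro ⟨x, hx0, heq⟩
    rcases hmem with ⟨hz, hprod, hns⟩ | ⟨hz, hprod, hns⟩ | ⟨hz, hprod, hns⟩ | ⟨hz, hprod, hns⟩
    · obtain ⟨v, hv⟩ := (ZMod.intCast_zmod_eq_zero_iff_dvd u0 p).mp hz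
      have hvZ := sqfree_unit p u0 v h0 hv
      have ha : (u1 : ZMod p) ≠ 0 := fun h => hprod (by rw [h]; ring)
      have hb : (u2 : ZMod p) ≠ 0 := fun h => hprod (by rw [h]; ring)
      have hc : (u3 : ZMod p) ≠ 0 := fun h => hprod (by rw [h]; ring)
      refine noSolCase p v u1 u2 u3 hvZ ha hb hc hns ⟨![x 0, x 2, x 3, x 1], ?_, ?_⟩
      · intro h
        apply hx0
        funext i
        fin_cases i
        · simpa using congrFun h 0
        · simpa using congrFun h 3
        · simpa using congrFun h 1
        · simpa using congrFun h 2
      · simp only [Matrix.cons_val_zero, Matrix.cons_val_one, Matrix.head_cons,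
          Matrix.cons_val_two, Matrix.tail_cons, Matrix.cons_val_three]
        rw [hv] at heq
        push_cast at heq ⊢
        linear_combination heq
    · obtain ⟨v, hv⟩ := (ZMod.intCast_zmod_eq_zero_iff_dvd u1 p).mp hz
      have hvZ := sqfree_unit p u1 v h1 hv
      have ha : (u0 : ZMod p) ≠ 0 := fun h => hprod (by rw [h]; ring)
      have hb : (u2 : ZMod p) ≠ 0 := fun h => hprod (by rw [h]; ring)
      have hc : (u3 : ZMod p) ≠ 0 := fun h => hprod (by rw [h]; ring)
      have hns' : ¬ ∃ a : ZMod p, a ≠ 0 ∧ a ^ 2 = -((u3 : ZMod p) * u2) := by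
        rintro ⟨a, ha', he⟩
        exact hns ⟨a, ha', by rw [he]; ring⟩
      refine noSolCase p v u0 u3 u2 hvZ ha hc hb hns' ⟨![x 1, x 3, x 2, x 0], ?_, ?_⟩
      · intro h
        apply hx0
        funext i
        fin_cases i
        · simpa using congrFun h 3
        · simpa using congrFun h 0
        · simpa using congrFun h 2
        · simpa using congrFun h 1
      · simp only [Matrix.cons_val_zero, Matrix.cons_val_one, Matrix.head_cons,
          Matrix.cons_val_two, Matrix.tail_cons, Matrix.cons_val_three]
        rw [hv] at heq
        push_cast at heq ⊢
        linear_combination heq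
    · obtain ⟨v, hv⟩ := (ZMod.intCast_zmod_eq_zero_iff_dvd u2 p).mp hz
      have hvZ := sqfree_unit p u2 v h2 hv
      have ha : (u0 : ZMod p) ≠ 0 := fun h => hprod (by rw [h]; ring)
      have hb : (u1 : ZMod p) ≠ 0 := fun h => hprod (by rw [h]; ring)
      have hc : (u3 : ZMod p) ≠ 0 := fun h => hprod (by rw [h]; ring)
      refine noSolCase p v u3 u0 u1 hvZ hc ha hb hns ⟨![x 0, x 3, x 2, x 1], ?_, ?_⟩
      · intro h
        apply hx0
        funext i
        fin_cases i
        · simpa using congrFun h 0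
        · simpa using congrFun h 3
        · simpa using congrFun h 2
        · simpa using congrFun h 1
      · simp only [Matrix.cons_val_zero, Matrix.cons_val_one, Matrix.head_cons,
          Matrix.cons_val_two, Matrix.tail_cons, Matrix.cons_val_three]
        rw [hv] at heq
        push_cast at heq ⊢
        linear_combination heq
    · obtain ⟨v, hv⟩ := (ZMod.intCast_zmod_eq_zero_iff_dvd u3 p).mp hz
      have hvZ := sqfree_unit p u3 v h3 hv
      have ha : (u0 : ZMod p) ≠ 0 := fun h => hprod (by rw [h]; ring)
      have hb : (u1 : ZMod p) ≠ 0 := fun h => hprod (by rw [h]; ring)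
      have hc : (u2 : ZMod p) ≠ 0 := fun h => hprod (by rw [h]; ring)
      have hns' : ¬ ∃ a : ZMod p, a ≠ 0 ∧ a ^ 2 = -((u1 : ZMod p) * u0) := by
        rintro ⟨a, ha', he⟩
        exact hns ⟨a, ha', by rw [he]; ring⟩
      refine noSolCase p v u2 u1 u0 hvZ hc hb ha hns' ⟨![x 1, x 2, x 3, x 0], ?_, ?_⟩
      · intro h
        apply hx0
        funext i
        fin_cases i
        · simpa using congrFun h 3
        · simpa using congrFun h 0
        · simpa using congrFun h 1
        · simpa using congrFun h 2
      · simp only [Matrix.cons_val_zero, Matrix.cons_val_one, Matrix.head_cons,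
          Matrix.cons_val_two, Matrix.tail_cons, Matrix.cons_val_three]
        rw [hv] at heq
        push_cast at heq ⊢
        linear_combination heq
  exact ⟨H, fun ⟨_, hall⟩ => H (hall p)⟩
end
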